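/- arXiv:2508.00666 — 5 statements merged into one kernel-verified Lean document; each statement's English description precedes it below -/
import Mathlib

section
/- Let a < b be real numbers, let ψ : (a,b) → [-∞,+∞) be upper semicontinuous, let Ω = {x+iy ∈ ℂ : a < y < b, x > ψ(y)}, and let h be a Koenigs map onto Ω. Then for every λ ∈ ℂ with λ ≠ 0 one has D(e^{λh}) < ∞ if and only if Re λ < 0 and ∫_a^b e^{2 Re λ · ψ(y)} dy < ∞. (Theorem 1.1(a): via Proposition 3.1 this characterizes the nonzero eigenvalues of the generator on the Dirichlet space for a hyperbolic semigroup with defining function ψ.) -/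
open MeasureTheory Set Complex Metric
open scoped ENNReal NNReal

noncomputable section

/-- The Dirichlet integral `D(f) = ∫_𝔻 |f'(z)|² dA(z)` over the unit disk. -/
def dirichletIntegral (f : ℂ → ℂ) : ℝ≥0∞ :=
  ∫⁻ z in ball (0 : ℂ) 1, (‖deriv f z‖₊ : ℝ≥0∞) ^ 2

/-- `h` is a Koenigs map onto `Ω`: an injective holomorphic map on the unit disk with image `Ω`. -/
def IsKoenigsMap (h : ℂ → ℂ) (Ω : Set ℂ) : Prop :=
  DifferentiableOn ℂ h (ball 0 1) ∧ InjOn h (ball 0 1) ∧ h '' ball 0 1 = Ω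

namespace DirAux
open Real

lemma mul_lt_top_iff_right {a x : ℝ≥0∞} (ha0 : a ≠ 0) (hat : a ≠ ⊤) :
    a * x < ⊤ ↔ x < ⊤ := by
  constructor
  · intro hx
    by_contra hx'
    rw [lt_top_iff_ne_top, not_not] at hx'
    rw [hx', ENNReal.mul_top ha0] at hx
    exact absurd hx (lt_irrefl _)
  · intro hx
    exact ENNReal.mul_lt_top hat.lt_top hx

lemma det_mul_complex (c : ℂ) :
    (((1 : ℂ →L[ℂ] ℂ).smulRight c).restrictScalars ℝ).det = Complex.normSq c := by
  have h1 : ((((1 : ℂ →L[ℂ] ℂ).smulRight c).restrictScalars ℝ : ℂ →L[ℝ] ℂ) : ℂ →ₗ[ℝ] ℂ)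
      = Algebra.lmul ℝ ℂ c := by
    apply LinearMap.ext
    intro z
    simp [mul_comm]
  show LinearMap.det _ = _
  rw [h1, ← Algebra.norm_apply, Algebra.norm_complex_apply]

lemma lintegral_exp_Ioi {k : ℝ} (hk : k < 0) (r : ℝ) :
    ∫⁻ x in Ioi r, ENNReal.ofReal (rexp (k * x)) =
      ENNReal.ofReal (rexp (k * r) * (1 / (-k))) := by
  have hint : IntegrableOn (fun x => rexp (k * x)) (Ioi r) := by
    have := exp_neg_integrableOn_Ioi r (neg_pos.mpr hk)
    simpa using this
  have hval : ∫ x in Ioi r, rexp (k * x) = rexp (k * r) * (1 / (-k)) := by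
    have hderiv : ∀ x ∈ Ioi r, HasDerivAt (fun x => rexp (k * x) / k) (rexp (k * x)) x := by
      intro x _
      have h1 : HasDerivAt (fun x : ℝ => k * x) (k * 1) x := (hasDerivAt_id x).const_mul k
      have h2 : HasDerivAt (fun x => rexp (k * x)) (rexp (k * x) * (k * 1)) x :=
        (Real.hasDerivAt_exp (k * x)).comp x h1
      have := h2.div_const k
      rw [mul_one, mul_div_assoc, div_self hk.ne, mul_one] at this
      exact this
    have htend : Filter.Tendsto (fun x => rexp (k * x) / k) Filter.atTop (nhds 0) := by
      have h1 : Filter.Tendsto (fun x : ℝ => k * x) Filter.atTop Filter.atBot :=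
        Filter.Tendsto.const_mul_atTop_of_neg hk Filter.tendsto_id
      have h2 : Filter.Tendsto (fun x => rexp (k * x)) Filter.atTop (nhds 0) :=
        Real.tendsto_exp_atBot.comp h1
      simpa using h2.div_const k
    have := integral_Ioi_of_hasDerivAt_of_tendsto
      (((Real.continuous_exp.comp (continuous_const.mul continuous_id)).div_const k).continuousWithinAt)
      hderiv hint htend
    rw [this]
    simp only [Function.comp, id]
    rw [zero_sub]
    rw [mul_one_div, div_neg]
    rfl
  rw [← hval]
  rw [← ofReal_integral_eq_lintegral_ofReal hint (Filter.Eventually.of_forall fun x => (Real.exp_pos _).le)]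


lemma lintegral_exp_univ_top {k : ℝ} (hk : k < 0) :
    ∫⁻ x : ℝ, ENNReal.ofReal (rexp (k * x)) = ⊤ := by
  rw [eq_top_iff]
  calc (⊤ : ℝ≥0∞) = volume (Iio (0:ℝ)) := Real.volume_Iio.symm
    _ = ∫⁻ _ in Iio (0:ℝ), (1:ℝ≥0∞) := by rw [setLIntegral_one]
    _ ≤ ∫⁻ x in Iio (0:ℝ), ENNReal.ofReal (rexp (k * x)) := by
        refine setLIntegral_mono (by fun_prop) fun x hx => ?_
        rw [show (1:ℝ≥0∞) = ENNReal.ofReal (rexp 0) by simp]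
        exact ENNReal.ofReal_le_ofReal (Real.exp_le_exp.mpr (by nlinarith [hx.out]))
    _ ≤ ∫⁻ x, ENNReal.ofReal (rexp (k * x)) := setLIntegral_le_lintegral _ _

lemma lintegral_exp_Ioi_top {k : ℝ} (hk : 0 ≤ k) (r : ℝ) :
    ∫⁻ x in Ioi r, ENNReal.ofReal (rexp (k * x)) = ⊤ := by
  rw [eq_top_iff]
  calc (⊤ : ℝ≥0∞) = ENNReal.ofReal (rexp (k * r)) * volume (Ioi r) := by
        rw [Real.volume_Ioi, ENNReal.mul_top (by simp [Real.exp_pos])]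
    _ = ∫⁻ _ in Ioi r, ENNReal.ofReal (rexp (k * r)) := (setLIntegral_const _ _).symm
    _ ≤ ∫⁻ x in Ioi r, ENNReal.ofReal (rexp (k * x)) := by
        refine setLIntegral_mono (by fun_prop) fun x hx => ?_
        exact ENNReal.ofReal_le_ofReal (Real.exp_le_exp.mpr
          (mul_le_mul_of_nonneg_left hx.out.le hk))

lemma measurableSet_slice (c : EReal) : MeasurableSet {x : ℝ | c < (x : EReal)} := by
  induction c using EReal.rec with
  | bot => simp only [EReal.bot_lt_coe, setOf_true]; exact MeasurableSet.univ
  | coe r =>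
      have : {x : ℝ | (r : EReal) < (x : EReal)} = Ioi r := by
        ext x; simp [EReal.coe_lt_coe_iff]
      rw [this]; exact measurableSet_Ioi
  | top => simp only [not_top_lt, setOf_false]; exact MeasurableSet.empty

lemma isOpen_S {a b : ℝ} {ψ : ℝ → EReal} (hψ : UpperSemicontinuousOn ψ (Ioo a b)) :
    IsOpen {p : ℝ × ℝ | p.2 ∈ Ioo a b ∧ ψ p.2 < (p.1 : EReal)} := by
  rw [isOpen_iff_mem_nhds]
  rintro ⟨x, y⟩ ⟨hy, hxy⟩
  obtain ⟨c, hc1, hc2⟩ := EReal.lt_iff_exists_real_btwn.mp hxy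
  have h1 : ∀ᶠ y' in nhds y, ψ y' < (c : EReal) := by
    have h := hψ y hy (c : EReal) hc1
    rwa [nhdsWithin_eq_nhds.2 (isOpen_Ioo.mem_nhds hy)] at h
  have h2 : ∀ᶠ y' in nhds y, y' ∈ Ioo a b := isOpen_Ioo.eventually_mem hy
  have hcx : c < x := by exact_mod_cast hc2
  refine Filter.mem_of_superset
    (prod_mem_nhds (Ioi_mem_nhds hcx) ((h1.and h2) : _)) ?_
  rintro ⟨x', y'⟩ ⟨hx', hy'⟩
  exact ⟨hy'.2, lt_trans hy'.1 (by exact_mod_cast hx'.out)⟩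


lemma lintegral_S (a b k : ℝ) (ψ : ℝ → EReal)
    (hS : MeasurableSet {p : ℝ × ℝ | p.2 ∈ Ioo a b ∧ ψ p.2 < (p.1 : EReal)}) :
    ∫⁻ p in {p : ℝ × ℝ | p.2 ∈ Ioo a b ∧ ψ p.2 < (p.1 : EReal)},
        ENNReal.ofReal (rexp (k * p.1)) =
      ∫⁻ y in Ioo a b, ∫⁻ x in {x : ℝ | ψ y < (x : EReal)}, ENNReal.ofReal (rexp (k * x)) := by
  set S := {p : ℝ × ℝ | p.2 ∈ Ioo a b ∧ ψ p.2 < (p.1 : EReal)} with hSdef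
  have hf : Measurable fun p : ℝ × ℝ => ENNReal.ofReal (rexp (k * p.1)) := by fun_prop
  rw [← lintegral_indicator hS, Measure.volume_eq_prod,
    lintegral_prod_symm _ ((hf.indicator hS).aemeasurable),
    ← lintegral_indicator measurableSet_Ioo]
  refine lintegral_congr fun y => ?_
  by_cases hy : y ∈ Ioo a b
  · rw [indicator_of_mem hy]
    have hx : ∀ x : ℝ, S.indicator (fun p : ℝ × ℝ => ENNReal.ofReal (rexp (k * p.1))) (x, y)
        = ({x : ℝ | ψ y < (x : EReal)}).indicator (fun x => ENNReal.ofReal (rexp (k * x))) x := by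
      intro x
      by_cases hxx : ψ y < (x : EReal)
      · rw [indicator_of_mem (show (x, y) ∈ S from ⟨hy, hxx⟩), indicator_of_mem (show x ∈ {x : ℝ | ψ y < (x : EReal)} from hxx)]
      · rw [indicator_of_notMem (fun hmem => hxx (hSdef ▸ hmem).2),
          indicator_of_notMem (show x ∉ {x : ℝ | ψ y < (x : EReal)} from hxx)]
    simp_rw [hx]
    rw [lintegral_indicator (measurableSet_slice (ψ y))]
  · rw [indicator_of_notMem hy]
    have hx : ∀ x : ℝ, S.indicator (fun p : ℝ × ℝ => ENNReal.ofReal (rexp (k * p.1))) (x, y) = 0 :=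
      fun x => indicator_of_notMem (fun hmem => hy (hSdef ▸ hmem).1) _
    simp [hx]


lemma inner_eq {k : ℝ} (hk : k < 0) (c : EReal) (hc : c < ⊤) :
    ∫⁻ x in {x : ℝ | c < (x : EReal)}, ENNReal.ofReal (rexp (k * x)) =
      ENNReal.ofReal (1 / (-k)) * EReal.exp ((k : EReal) * c) := by
  induction c using EReal.rec with
  | bot =>
      have hset : {x : ℝ | (⊥ : EReal) < (x : EReal)} = univ := by
        ext x; simp [EReal.bot_lt_coe]
      rw [hset, Measure.restrict_univ, lintegral_exp_univ_top hk,
        EReal.coe_mul_bot_of_neg hk, EReal.exp_top,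
        ENNReal.mul_top (ENNReal.ofReal_pos.mpr (one_div_pos.mpr (by linarith))).ne']
  | coe q =>
      have hset : {x : ℝ | (q : EReal) < (x : EReal)} = Ioi q := by
        ext x; simp [EReal.coe_lt_coe_iff]
      rw [hset, lintegral_exp_Ioi hk q, ← EReal.coe_mul, EReal.exp_coe,
        ← ENNReal.ofReal_mul (le_of_lt (one_div_pos.mpr (by linarith))), mul_comm]
  | top => exact absurd hc (lt_irrefl _)

lemma dirichlet_eq (h : ℂ → ℂ) (Ω : Set ℂ) (hK : IsKoenigsMap h Ω) (lam : ℂ) :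
    dirichletIntegral (fun z => Complex.exp (lam * h z)) =
      ∫⁻ w in Ω, (‖lam‖₊ : ℝ≥0∞) ^ 2 * ENNReal.ofReal (rexp (2 * (lam * w).re)) := by
  obtain ⟨hdiff, hinj, himg⟩ := hK
  have hder : ∀ z ∈ ball (0:ℂ) 1, HasDerivAt h (deriv h z) z := fun z hz =>
    (hdiff.differentiableAt (isOpen_ball.mem_nhds hz)).hasDerivAt
  have hf' : ∀ z ∈ ball (0:ℂ) 1, HasFDerivWithinAt h
      ((fun z => ((1 : ℂ →L[ℂ] ℂ).smulRight (deriv h z)).restrictScalars ℝ) z)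
      (ball (0:ℂ) 1) z := fun z hz =>
    (((hder z hz).hasFDerivAt).restrictScalars ℝ).hasFDerivWithinAt
  have key := lintegral_image_eq_lintegral_abs_det_fderiv_mul volume measurableSet_ball hf' hinj
    (fun w => (‖lam‖₊ : ℝ≥0∞) ^ 2 * ENNReal.ofReal (rexp (2 * (lam * w).re)))
  rw [himg] at key
  rw [key]
  unfold dirichletIntegral
  refine setLIntegral_congr_fun measurableSet_ball (fun z hz => ?_)
  have hgd : HasDerivAt (fun z => Complex.exp (lam * h z))
      (Complex.exp (lam * h z) * (lam * deriv h z)) z := ((hder z hz).const_mul lam).cexp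
  rw [hgd.deriv, det_mul_complex, _root_.abs_of_nonneg (Complex.normSq_nonneg _)]
  have h1 : ∀ x : ℂ, ((‖x‖₊ : ℝ≥0∞)) ^ 2 = ENNReal.ofReal (‖x‖ ^ 2) := fun x => by
    rw [ENNReal.ofReal_pow (norm_nonneg _), ← coe_nnnorm x, ENNReal.ofReal_coe_nnreal]
  rw [h1, h1]
  have hreal : ‖Complex.exp (lam * h z) * (lam * deriv h z)‖ ^ 2 =
      Complex.normSq (deriv h z) * (‖lam‖ ^ 2 * rexp (2 * (lam * h z).re)) := by
    rw [norm_mul, norm_mul, Complex.norm_exp,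
      Complex.normSq_eq_norm_sq, two_mul, Real.exp_add]
    ring
  rw [hreal, ENNReal.ofReal_mul (Complex.normSq_nonneg _), ENNReal.ofReal_mul (by positivity)]

end DirAux

open Real

/-- **Theorem 1.1(a).** For the Koenigs domain `Ω = {x+iy : a < y < b, x > ψ(y)}` of a
hyperbolic semigroup, a nonzero `λ` is an eigenvalue of the generator on the Dirichlet space
(i.e. `D(e^{λh}) < ∞`) iff `Re λ < 0` and `∫_a^b e^{2 Re λ · ψ(y)} dy < ∞`. -/
theorem dirichlet_spectrum_hyperbolic_defining_function
    (a b : ℝ) (hab : a < b) (ψ : ℝ → EReal)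
    (hψ_usc : UpperSemicontinuousOn ψ (Ioo a b))
    (hψ_lt_top : ∀ y ∈ Ioo a b, ψ y < ⊤)
    (Ω : Set ℂ)
    (hΩ : Ω = {w : ℂ | w.im ∈ Ioo a b ∧ ψ w.im < (w.re : EReal)})
    (h : ℂ → ℂ) (hKoenigs : IsKoenigsMap h Ω)
    (lam : ℂ) (hlam : lam ≠ 0) :
    dirichletIntegral (fun z => Complex.exp (lam * h z)) < ⊤ ↔
      (lam.re < 0 ∧
        ∫⁻ y in Ioo a b, EReal.exp (((2 * lam.re : ℝ) : EReal) * ψ y) < ⊤) := by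
  classical
  set k : ℝ := 2 * lam.re with hk
  set S : Set (ℝ × ℝ) := {p : ℝ × ℝ | p.2 ∈ Ioo a b ∧ ψ p.2 < (p.1 : EReal)} with hSdef
  have hSmeas : MeasurableSet S := (DirAux.isOpen_S hψ_usc).measurableSet
  set J : ℝ≥0∞ := ∫⁻ w in Ω, ENNReal.ofReal (rexp (k * w.re)) with hJdef
  have hΩS : Complex.measurableEquivRealProd.symm '' S = Ω := by
    rw [hΩ]
    ext w
    constructor
    · rintro ⟨p, hp, rfl⟩; exact hp
    · intro hw
      exact ⟨(w.re, w.im), hw, by simp [Complex.measurableEquivRealProd_symm_apply,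
        Complex.ext_iff]⟩
  have hJ2 : J = ∫⁻ y in Ioo a b,
      ∫⁻ x in {x : ℝ | ψ y < (x : EReal)}, ENNReal.ofReal (rexp (k * x)) := by
    rw [hJdef, ← hΩS,
      ← (MeasurePreserving.symm Complex.measurableEquivRealProd
          Complex.volume_preserving_equiv_real_prod).setLIntegral_comp_emb
        Complex.measurableEquivRealProd.symm.measurableEmbedding
        (fun w => ENNReal.ofReal (rexp (k * w.re))) S]
    exact DirAux.lintegral_S a b k ψ hSmeas
  set Dint : ℝ≥0∞ := ∫⁻ w in Ω, ENNReal.ofReal (rexp (2 * (lam * w).re)) with hDint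
  have hlamsqt : ((‖lam‖₊ : ℝ≥0∞) ^ 2) ≠ ⊤ := ENNReal.pow_ne_top ENNReal.coe_ne_top
  have hlamsq0 : ((‖lam‖₊ : ℝ≥0∞) ^ 2) ≠ 0 := by simp [hlam]
  have hDeq : dirichletIntegral (fun z => Complex.exp (lam * h z)) =
      (‖lam‖₊ : ℝ≥0∞) ^ 2 * Dint := by
    rw [hDint, DirAux.dirichlet_eq h Ω hKoenigs lam]
    exact lintegral_const_mul' _ _ hlamsqt
  have hstep1 : dirichletIntegral (fun z => Complex.exp (lam * h z)) < ⊤ ↔ Dint < ⊤ := by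
    rw [hDeq]; exact DirAux.mul_lt_top_iff_right hlamsq0 hlamsqt
  -- sandwich between Dint and J
  set T : ℝ := 2 * |lam.im| * (|a| + |b|) with hT
  have him_bound : ∀ w : ℂ, w ∈ Ω → |2 * lam.im * w.im| ≤ T := by
    intro w hw
    rw [hΩ] at hw
    have h1 : a < w.im := hw.1.1
    have h2 : w.im < b := hw.1.2
    have h3 : |w.im| ≤ |a| + |b| := abs_le.mpr
      ⟨by linarith [neg_abs_le a, abs_nonneg b], by linarith [le_abs_self b, abs_nonneg a]⟩
    calc |2 * lam.im * w.im| = 2 * |lam.im| * |w.im| := by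
          rw [abs_mul, abs_mul, _root_.abs_two]
      _ ≤ 2 * |lam.im| * (|a| + |b|) := by
          exact mul_le_mul_of_nonneg_left h3 (by positivity)
      _ = T := hT.symm
  have hsplit : ∀ w : ℂ, 2 * (lam * w).re = k * w.re - 2 * lam.im * w.im := by
    intro w; rw [hk, Complex.mul_re]; ring
  have hptD : ∀ w ∈ Ω, ENNReal.ofReal (rexp (2 * (lam * w).re)) ≤
      ENNReal.ofReal (rexp T) * ENNReal.ofReal (rexp (k * w.re)) := by
    intro w hw
    rw [← ENNReal.ofReal_mul (Real.exp_pos _).le, ← Real.exp_add]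
    refine ENNReal.ofReal_le_ofReal (Real.exp_le_exp.mpr ?_)
    have hb := abs_le.mp (him_bound w hw)
    rw [hsplit w]; linarith [hb.1]
  have hptJ : ∀ w ∈ Ω, ENNReal.ofReal (rexp (k * w.re)) ≤
      ENNReal.ofReal (rexp T) * ENNReal.ofReal (rexp (2 * (lam * w).re)) := by
    intro w hw
    rw [← ENNReal.ofReal_mul (Real.exp_pos _).le, ← Real.exp_add]
    refine ENNReal.ofReal_le_ofReal (Real.exp_le_exp.mpr ?_)
    have hb := abs_le.mp (him_bound w hw)
    have := hsplit w; linarith [hb.2]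
  have hDJ : Dint ≤ ENNReal.ofReal (rexp T) * J := by
    rw [hDint, hJdef, ← lintegral_const_mul' _ _ ENNReal.ofReal_ne_top]
    exact setLIntegral_mono (by fun_prop) hptD
  have hJD : J ≤ ENNReal.ofReal (rexp T) * Dint := by
    rw [hDint, hJdef, ← lintegral_const_mul' _ _ ENNReal.ofReal_ne_top]
    exact setLIntegral_mono (by fun_prop) hptJ
  have hsand : Dint < ⊤ ↔ J < ⊤ := by
    constructor
    · intro hd; exact lt_of_le_of_lt hJD (ENNReal.mul_lt_top ENNReal.ofReal_lt_top hd)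
    · intro hj; exact lt_of_le_of_lt hDJ (ENNReal.mul_lt_top ENNReal.ofReal_lt_top hj)
  rw [hstep1, hsand]
  -- now prove : J < ⊤ ↔ lam.re < 0 ∧ ∫⁻ E < ⊤
  constructor
  · intro hJfin
    have hc : lam.re < 0 := by
      by_contra hc
      push_neg at hc
      have hk0 : 0 ≤ k := by rw [hk]; linarith
      have hIy : ∀ y ∈ Ioo a b,
          (∫⁻ x in {x : ℝ | ψ y < (x : EReal)}, ENNReal.ofReal (rexp (k * x))) = ⊤ := by
        intro y hy
        obtain ⟨r, hr1, -⟩ := EReal.lt_iff_exists_real_btwn.mp (hψ_lt_top y hy)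
        rw [eq_top_iff]
        calc (⊤ : ℝ≥0∞) = ∫⁻ x in Ioi r, ENNReal.ofReal (rexp (k * x)) :=
              (DirAux.lintegral_exp_Ioi_top hk0 r).symm
          _ ≤ _ := lintegral_mono_set (fun x hx => lt_trans hr1 (by exact_mod_cast hx.out))
      have : J = ⊤ := by
        rw [hJ2, setLIntegral_congr_fun measurableSet_Ioo
          hIy, setLIntegral_const, Real.volume_Ioo]
        rw [ENNReal.top_mul (ENNReal.ofReal_pos.mpr (sub_pos.mpr hab)).ne']
      rw [this] at hJfin
      exact absurd hJfin (lt_irrefl _)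
    refine ⟨hc, ?_⟩
    have hkneg : k < 0 := by rw [hk]; linarith
    have hIy : ∀ y ∈ Ioo a b,
        (∫⁻ x in {x : ℝ | ψ y < (x : EReal)}, ENNReal.ofReal (rexp (k * x)))
          = ENNReal.ofReal (1 / (-k)) * EReal.exp ((k : EReal) * ψ y) :=
      fun y hy => DirAux.inner_eq hkneg (ψ y) (hψ_lt_top y hy)
    have hJE : J = ENNReal.ofReal (1 / (-k)) *
        ∫⁻ y in Ioo a b, EReal.exp ((k : EReal) * ψ y) := by
      rw [hJ2, setLIntegral_congr_fun measurableSet_Ioo hIy]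
      exact lintegral_const_mul' _ _ ENNReal.ofReal_ne_top
    rw [hJE] at hJfin
    exact (DirAux.mul_lt_top_iff_right
      (ENNReal.ofReal_pos.mpr (one_div_pos.mpr (by linarith))).ne'
      ENNReal.ofReal_ne_top).mp hJfin
  · rintro ⟨hc, hE⟩
    have hkneg : k < 0 := by rw [hk]; linarith
    have hIy : ∀ y ∈ Ioo a b,
        (∫⁻ x in {x : ℝ | ψ y < (x : EReal)}, ENNReal.ofReal (rexp (k * x)))
          = ENNReal.ofReal (1 / (-k)) * EReal.exp ((k : EReal) * ψ y) :=
      fun y hy => DirAux.inner_eq hkneg (ψ y) (hψ_lt_top y hy)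
    have hJE : J = ENNReal.ofReal (1 / (-k)) *
        ∫⁻ y in Ioo a b, EReal.exp ((k : EReal) * ψ y) := by
      rw [hJ2, setLIntegral_congr_fun measurableSet_Ioo hIy]
      exact lintegral_const_mul' _ _ ENNReal.ofReal_ne_top
    rw [hJE]
    exact ENNReal.mul_lt_top ENNReal.ofReal_lt_top hE
end
end

section
/- Let a < b be real numbers, let ψ : (a,b) → [-∞,+∞) be upper semicontinuous, let Ω = {x+iy ∈ ℂ : a < y < b, x > ψ(y)}, let h be a Koenigs map onto Ω, and set c_Ω := inf{c ∈ (-∞,0) : ∫_a^b e^{2cψ(y)} dy < ∞}. Suppose this set is nonempty, c_Ω ∈ (-∞,0), and ∫_a^b e^{2c_Ω ψ(y)} dy = +∞. Then for every λ ∈ ℂ with λ ≠ 0 one has D(e^{λh}) < ∞ if and only if c_Ω < Re λ < 0; that is, the point spectrum on the Dirichlet space equals the open vertical strip {c_Ω < Re λ < 0} together with {0}. (Theorem 1.1(c).) -/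
open MeasureTheory Set Complex Metric
open scoped ENNReal NNReal

noncomputable section

lemma det_mul_aux (w : ℂ) :
    (((1 : ℂ →L[ℂ] ℂ).smulRight w).restrictScalars ℝ : ℂ →L[ℝ] ℂ).det = Complex.normSq w := by
  have h1 : (((1 : ℂ →L[ℂ] ℂ).smulRight w).restrictScalars ℝ : ℂ →L[ℝ] ℂ).det
      = LinearMap.det ((((1 : ℂ →L[ℂ] ℂ).smulRight w).restrictScalars ℝ : ℂ →L[ℝ] ℂ) :
        ℂ →ₗ[ℝ] ℂ) := rfl
  rw [h1, ← LinearMap.det_toMatrix Complex.basisOneI, Matrix.det_fin_two]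
  simp [LinearMap.toMatrix_apply, Complex.coe_basisOneI, Complex.coe_basisOneI_repr,
    Complex.normSq_apply, Complex.mul_re, Complex.mul_im]

lemma norm_deriv_aux (u d lamc : ℂ) :
    ((‖Complex.exp u * (lamc * d)‖₊ : ℝ≥0∞)) ^ 2 =
      ENNReal.ofReal |Complex.normSq d| *
        ((‖lamc‖₊ : ℝ≥0∞) ^ 2 * ENNReal.ofReal (Real.exp (2 * u.re))) := by
  have h1 : ENNReal.ofReal |Complex.normSq d| = (‖d‖₊ : ℝ≥0∞) ^ 2 := by
    rw [_root_.abs_of_nonneg (Complex.normSq_nonneg d), Complex.normSq_eq_norm_sq, sq,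
      ENNReal.ofReal_mul (norm_nonneg d), ofReal_norm, sq]
    rfl
  have h2 : ENNReal.ofReal (Real.exp (2 * u.re)) = (‖Complex.exp u‖₊ : ℝ≥0∞) ^ 2 := by
    rw [two_mul, Real.exp_add, ENNReal.ofReal_mul (Real.exp_nonneg _)]
    have : Real.exp u.re = ‖Complex.exp u‖ := by
      rw [Complex.norm_exp]
    rw [this, ofReal_norm, sq]
    rfl
  rw [h1, h2, nnnorm_mul, nnnorm_mul]
  push_cast
  ring

lemma inner_neg {σ : ℝ} (hσ : σ < 0) (r : ℝ) :
    ∫⁻ x in Ioi r, ENNReal.ofReal (Real.exp (2 * σ * x)) =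
      ENNReal.ofReal (Real.exp (2 * σ * r) / (-(2 * σ))) := by
  have hb : (0:ℝ) < -(2*σ) := by linarith
  have hne : (2*σ) ≠ 0 := by linarith
  have hint : IntegrableOn (fun x : ℝ => Real.exp (2 * σ * x)) (Ioi r) := by
    simpa [neg_neg] using exp_neg_integrableOn_Ioi r hb
  rw [← ofReal_integral_eq_lintegral_ofReal hint
    (Filter.Eventually.of_forall fun x => (Real.exp_pos _).le)]
  congr 1
  have hF : ∀ x ∈ Ici r, HasDerivAt (fun x => Real.exp (2*σ*x) / (2*σ))
      (Real.exp (2*σ*x)) x := by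
    intro x _
    have h1 := (((hasDerivAt_id x).const_mul (2*σ)).exp).div_const (2*σ)
    simp only [id, mul_one] at h1
    rwa [mul_div_cancel_right₀ _ hne] at h1
  have htend : Filter.Tendsto (fun x => Real.exp (2*σ*x) / (2*σ)) Filter.atTop (nhds 0) := by
    have h2 : Filter.Tendsto (fun x : ℝ => (-(2*σ)) * x) Filter.atTop Filter.atTop :=
      Filter.Tendsto.const_mul_atTop hb Filter.tendsto_id
    have h0 : Filter.Tendsto (fun x : ℝ => Real.exp (2*σ*x)) Filter.atTop (nhds 0) := by
      have h3 := Real.tendsto_exp_neg_atTop_nhds_zero.comp h2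
      have h4 : ((fun x : ℝ => Real.exp (-x)) ∘ fun x : ℝ => (-(2*σ))*x)
          = fun x : ℝ => Real.exp (2*σ*x) := by
        funext x; simp [Function.comp]
      rwa [h4] at h3
    simpa using h0.div_const (2*σ)
  rw [integral_Ioi_of_hasDerivAt_of_tendsto' hF hint htend]
  field_simp
  ring

lemma exp_lint_Ioi_top {σ : ℝ} (hσ : 0 ≤ σ) (r : ℝ) :
    ∫⁻ x in Ioi r, ENNReal.ofReal (Real.exp (2 * σ * x)) = ⊤ := by
  refine eq_top_iff.2 ?_
  calc (⊤ : ℝ≥0∞) = volume (Ioi (max r 0)) := Real.volume_Ioi.symm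
    _ = ∫⁻ _ in Ioi (max r 0), 1 := (setLIntegral_one _).symm
    _ ≤ ∫⁻ x in Ioi (max r 0), ENNReal.ofReal (Real.exp (2 * σ * x)) := by
        refine setLIntegral_mono' measurableSet_Ioi fun x hx => ?_
        have hx0 : (0:ℝ) ≤ x := le_of_lt (lt_of_le_of_lt (le_max_right r 0) hx)
        have h1 : (1:ℝ) ≤ Real.exp (2*σ*x) := Real.one_le_exp (by positivity)
        simpa using ENNReal.one_le_ofReal.2 h1
    _ ≤ ∫⁻ x in Ioi r, ENNReal.ofReal (Real.exp (2 * σ * x)) :=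
        lintegral_mono_set (Ioi_subset_Ioi (le_max_left r 0))

lemma exp_lint_univ_top (σ : ℝ) :
    ∫⁻ x, ENNReal.ofReal (Real.exp (2 * σ * x)) = ⊤ := by
  rw [← setLIntegral_univ]
  rcases le_or_gt 0 σ with hσ | hσ
  · refine eq_top_iff.2 ?_
    rw [← exp_lint_Ioi_top hσ 0]
    exact lintegral_mono_set (subset_univ _)
  · refine eq_top_iff.2 ?_
    calc (⊤ : ℝ≥0∞) = volume (Iio (0:ℝ)) := Real.volume_Iio.symm
      _ = ∫⁻ _ in Iio (0:ℝ), 1 := (setLIntegral_one _).symm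
      _ ≤ ∫⁻ x in Iio (0:ℝ), ENNReal.ofReal (Real.exp (2 * σ * x)) := by
          refine setLIntegral_mono' measurableSet_Iio fun x hx => ?_
          have h1 : (1:ℝ) ≤ Real.exp (2*σ*x) := Real.one_le_exp (by nlinarith [le_of_lt (mem_Iio.mp hx)])
          simpa using ENNReal.one_le_ofReal.2 h1
      _ ≤ ∫⁻ x in univ, ENNReal.ofReal (Real.exp (2 * σ * x)) :=
          lintegral_mono_set (subset_univ _)

lemma Epoint {c σ : ℝ} (hc : c < σ) (hσ : σ < 0) (t : EReal) :
    EReal.exp (((2*σ : ℝ) : EReal) * t) ≤ 1 + EReal.exp (((2*c : ℝ) : EReal) * t) := by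
  induction t with
  | bot =>
      rw [EReal.coe_mul_bot_of_neg (by linarith), EReal.coe_mul_bot_of_neg (by linarith)]
      simp
  | coe r =>
      rcases le_or_gt 0 r with hr | hr
      · refine le_trans ?_ le_self_add
        rw [← EReal.coe_mul, EReal.exp_coe]
        calc ENNReal.ofReal (Real.exp (2*σ*r)) ≤ ENNReal.ofReal (Real.exp 0) :=
              ENNReal.ofReal_le_ofReal (Real.exp_le_exp.2 (by nlinarith))
          _ = 1 := by simp
      · refine le_trans ?_ le_add_self
        rw [← EReal.coe_mul, ← EReal.coe_mul, EReal.exp_coe, EReal.exp_coe]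
        exact ENNReal.ofReal_le_ofReal (Real.exp_le_exp.2 (by nlinarith))
  | top =>
      rw [EReal.coe_mul_top_of_neg (by linarith)]
      simp

lemma measurable_T (a b : ℝ) (ψ : ℝ → EReal) (hψ_usc : UpperSemicontinuousOn ψ (Ioo a b)) :
    MeasurableSet {p : ℝ × ℝ | p.2 ∈ Ioo a b ∧ ψ p.2 < (p.1 : EReal)} := by
  have hA : ∀ q : ℚ, MeasurableSet {y : ℝ | y ∈ Ioo a b ∧ ψ y < (((q:ℝ)):EReal)} := by
    intro q
    set A := {y : ℝ | y ∈ Ioo a b ∧ ψ y < (((q:ℝ)):EReal)} with hAdef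
    have h1 : ∀ y ∈ A, ∃ V : Set ℝ, IsOpen V ∧ y ∈ V ∧
        ∀ z ∈ V, z ∈ Ioo a b → ψ z < (((q:ℝ)):EReal) := by
      intro y hy
      have h2 := hψ_usc y hy.1 (((q:ℝ)):EReal) hy.2
      rw [eventually_nhdsWithin_iff] at h2
      rcases _root_.eventually_nhds_iff.mp h2 with ⟨V, hV1, hV2, hV3⟩
      exact ⟨V, hV2, hV3, fun z hz hz2 => hV1 z hz hz2⟩
    choose! V hVopen hVmem hVsub using h1
    have hset : A = (⋃ y ∈ A, V y) ∩ Ioo a b := by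
      ext z; constructor
      · intro hz; exact ⟨mem_biUnion hz (hVmem z hz), hz.1⟩
      · rintro ⟨hz1, hz2⟩
        rcases mem_iUnion₂.mp hz1 with ⟨y, hy, hzV⟩
        exact ⟨hz2, hVsub y hy z hzV hz2⟩
    rw [hset]
    exact ((isOpen_biUnion fun y hy => hVopen y hy).measurableSet).inter measurableSet_Ioo
  have hT : {p : ℝ × ℝ | p.2 ∈ Ioo a b ∧ ψ p.2 < (p.1 : EReal)}
      = ⋃ q : ℚ, (Ioi ((q:ℝ)) ×ˢ {y : ℝ | y ∈ Ioo a b ∧ ψ y < (((q:ℝ)):EReal)}) := by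
    ext p
    simp only [mem_iUnion, mem_prod, mem_Ioi, mem_setOf_eq]
    constructor
    · rintro ⟨h1, h2⟩
      rcases EReal.exists_rat_btwn_of_lt h2 with ⟨q, hq1, hq2⟩
      refine ⟨q, ?_, h1, hq1⟩
      exact_mod_cast hq2
    · rintro ⟨q, hq1, h1, h2⟩
      refine ⟨h1, h2.trans ?_⟩
      exact_mod_cast hq1
  rw [hT]
  exact MeasurableSet.iUnion fun q => measurableSet_Ioi.prod (hA q)


/-- **Theorem 1.1(c).** With `c_Ω = inf{c < 0 : ∫_a^b e^{2cψ} dy < ∞}` finite and negative, if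
`∫_a^b e^{2 c_Ω ψ(y)} dy = +∞` then the nonzero point spectrum on the Dirichlet space is the
open vertical strip `{c_Ω < Re λ < 0}`. -/
theorem dirichlet_spectrum_hyperbolic_open_strip
    (a b : ℝ) (hab : a < b) (ψ : ℝ → EReal)
    (hψ_usc : UpperSemicontinuousOn ψ (Ioo a b))
    (hψ_lt_top : ∀ y ∈ Ioo a b, ψ y < ⊤)
    (Ω : Set ℂ)
    (hΩ : Ω = {w : ℂ | w.im ∈ Ioo a b ∧ ψ w.im < (w.re : EReal)})
    (h : ℂ → ℂ) (hKoenigs : IsKoenigsMap h Ω)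
    (S : Set ℝ)
    (hS : S = {c : ℝ | c < 0 ∧
      ∫⁻ y in Ioo a b, EReal.exp (((2 * c : ℝ) : EReal) * ψ y) < ⊤})
    (hSne : S.Nonempty) (hSbdd : BddBelow S) (hcΩ_neg : sInf S < 0)
    (hcΩ_int : ∫⁻ y in Ioo a b, EReal.exp (((2 * sInf S : ℝ) : EReal) * ψ y) = ⊤)
    (lam : ℂ) (hlam : lam ≠ 0) :
    dirichletIntegral (fun z => Complex.exp (lam * h z)) < ⊤ ↔
      (sInf S < lam.re ∧ lam.re < 0) := by
  obtain ⟨hdiff, hinj, himg⟩ := hKoenigs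
  set σ := lam.re with hσdef
  set τ := lam.im with hτdef
  -- the function I
  set Int : ℝ → ℝ≥0∞ := fun u => ∫⁻ y in Ioo a b, EReal.exp (((2 * u : ℝ) : EReal) * ψ y)
    with hIntdef
  -- Step 1 : characterization of S
  have hmem : ∀ u : ℝ, u ∈ S ↔ (u < 0 ∧ Int u < ⊤) := by
    intro u; rw [hS]; exact Iff.rfl
  have hSchar : ∀ u : ℝ, (u < 0 ∧ Int u < ⊤) ↔ (sInf S < u ∧ u < 0) := by
    intro u
    constructor
    · rintro ⟨hu0, huI⟩
      refine ⟨?_, hu0⟩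
      have hle : sInf S ≤ u := csInf_le hSbdd ((hmem u).2 ⟨hu0, huI⟩)
      rcases lt_or_eq_of_le hle with hlt | heq
      · exact hlt
      · exfalso
        rw [← heq] at huI
        have h7 : Int (sInf S) = ⊤ := hcΩ_int
        rw [h7] at huI
        exact lt_irrefl _ huI
    · rintro ⟨h1, h2⟩
      refine ⟨h2, ?_⟩
      obtain ⟨c, hcS, hcu⟩ : ∃ c ∈ S, c < u := by
        by_contra hno
        push_neg at hno
        exact absurd (le_csInf hSne hno) (not_le.2 h1)
      obtain ⟨hc0, hcI⟩ := (hmem c).1 hcS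
      have hmono : Int u ≤ ∫⁻ y in Ioo a b,
          (1 + EReal.exp (((2 * c : ℝ) : EReal) * ψ y)) :=
        lintegral_mono fun y => Epoint hcu h2 (ψ y)
      have hsplit : (∫⁻ y in Ioo a b, (1 + EReal.exp (((2 * c : ℝ) : EReal) * ψ y)))
          = volume (Ioo a b) + Int c := by
        rw [lintegral_add_left measurable_const, setLIntegral_one]
      refine lt_of_le_of_lt hmono ?_
      rw [hsplit]
      exact ENNReal.add_lt_top.2 ⟨by simp [Real.volume_Ioo], hcI⟩
  -- basic constants
  have hballopen : IsOpen (ball (0:ℂ) 1) := isOpen_ball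
  have hda : ∀ z ∈ ball (0:ℂ) 1, DifferentiableAt ℂ h z := fun z hz =>
    hdiff.differentiableAt (hballopen.mem_nhds hz)
  set c2 : ℝ≥0∞ := (‖lam‖₊ : ℝ≥0∞) ^ 2 with hc2def
  have hc2ne0 : c2 ≠ 0 := by
    simp [hc2def, pow_eq_zero_iff, nnnorm_eq_zero, hlam]
  have hc2netop : c2 ≠ ⊤ := by
    simp [hc2def]
  -- Step 2 : change of variables
  set g : ℂ → ℝ≥0∞ := fun w => c2 * ENNReal.ofReal (Real.exp (2 * (lam * w).re)) with hgdef
  set f' : ℂ → ℂ →L[ℝ] ℂ :=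
    fun z => ((1 : ℂ →L[ℂ] ℂ).smulRight (deriv h z)).restrictScalars ℝ with hf'def
  have hf' : ∀ z ∈ ball (0:ℂ) 1, HasFDerivWithinAt h (f' z) (ball 0 1) z := fun z hz =>
    (((hda z hz).hasDerivAt).hasFDerivAt.restrictScalars ℝ).hasFDerivWithinAt
  have hchg := lintegral_image_eq_lintegral_abs_det_fderiv_mul volume
    measurableSet_ball hf' hinj g
  rw [himg] at hchg
  have hD : dirichletIntegral (fun z => Complex.exp (lam * h z)) = ∫⁻ w in Ω, g w := by
    rw [hchg]
    unfold dirichletIntegral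
    refine setLIntegral_congr_fun measurableSet_ball (fun z hz => ?_)
    have hder : deriv (fun z => Complex.exp (lam * h z)) z
        = Complex.exp (lam * h z) * (lam * deriv h z) :=
      (((hda z hz).hasDerivAt.const_mul lam).cexp).deriv
    rw [hder]
    have hdet : (f' z).det = Complex.normSq (deriv h z) := det_mul_aux (deriv h z)
    rw [hdet]
    exact norm_deriv_aux (lam * h z) (deriv h z) lam
  -- Step 3 : to the product space
  set T : Set (ℝ × ℝ) := {p : ℝ × ℝ | p.2 ∈ Ioo a b ∧ ψ p.2 < (p.1 : EReal)} with hTdef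
  have hTmeas : MeasurableSet T := measurable_T a b ψ hψ_usc
  set F : ℝ × ℝ → ℝ≥0∞ := fun p =>
    ENNReal.ofReal (Real.exp (-(2*τ) * p.2)) * ENNReal.ofReal (Real.exp (2*σ*p.1)) with hFdef
  have hpre : Complex.measurableEquivRealProd ⁻¹' T = Ω := by
    rw [hΩ]
    ext w
    simp only [hTdef, mem_preimage, Complex.measurableEquivRealProd_apply, mem_setOf_eq]
  have hgF : ∀ w : ℂ, g w = c2 * F (Complex.measurableEquivRealProd w) := by
    intro w
    have hre : (lam * w).re = σ * w.re - τ * w.im := by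
      rw [Complex.mul_re]
    rw [hgdef, hFdef]
    simp only [Complex.measurableEquivRealProd_apply]
    rw [hre]
    have : 2 * (σ * w.re - τ * w.im) = (-(2*τ)) * w.im + 2*σ*w.re := by ring
    rw [this, Real.exp_add, ENNReal.ofReal_mul (Real.exp_nonneg _)]
  have h3 : (∫⁻ w in Ω, g w) = c2 * ∫⁻ p in T, F p ∂((volume : Measure ℝ).prod volume) := by
    calc (∫⁻ w in Ω, g w)
        = ∫⁻ w in Complex.measurableEquivRealProd ⁻¹' T,
            c2 * F (Complex.measurableEquivRealProd w) := by
          rw [hpre]; exact lintegral_congr fun w => hgF w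
      _ = ∫⁻ p in T, c2 * F p ∂(volume : Measure (ℝ × ℝ)) :=
          Complex.volume_preserving_equiv_real_prod.setLIntegral_comp_preimage_emb
            Complex.measurableEquivRealProd.measurableEmbedding
            (fun p => c2 * F p) T
      _ = ∫⁻ p in T, c2 * F p ∂((volume : Measure ℝ).prod volume) := by
          rw [← Measure.volume_eq_prod]
      _ = c2 * ∫⁻ p in T, F p ∂((volume : Measure ℝ).prod volume) :=
          lintegral_const_mul' _ _ hc2netop
  -- Step 4 : Fubini
  set J : ℝ → ℝ≥0∞ := fun y =>
    ∫⁻ x in {x : ℝ | ψ y < (x:EReal)}, ENNReal.ofReal (Real.exp (2*σ*x)) with hJdef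
  set A : ℝ → ℝ≥0∞ := fun y => ENNReal.ofReal (Real.exp (-(2*τ) * y)) with hAdef
  have hsets : ∀ y ∈ Ioo a b, (ψ y = ⊥ ∧ {x : ℝ | ψ y < (x:EReal)} = univ) ∨
      ∃ r : ℝ, ψ y = (r : EReal) ∧ {x : ℝ | ψ y < (x:EReal)} = Ioi r := by
    intro y hy
    by_cases hb : ψ y = ⊥
    · left
      refine ⟨hb, ?_⟩
      ext x; simp [hb]
    · right
      have hnt : ψ y ≠ ⊤ := (hψ_lt_top y hy).ne
      have hr : ψ y = (((ψ y).toReal : ℝ) : EReal) := (EReal.coe_toReal hnt hb).symm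
      refine ⟨(ψ y).toReal, hr, ?_⟩
      ext x
      simp only [mem_setOf_eq, mem_Ioi]
      constructor
      · intro hx; rw [hr] at hx; exact EReal.coe_lt_coe_iff.1 hx
      · intro hx; rw [hr]; exact EReal.coe_lt_coe_iff.2 hx
  have hSymeas : ∀ y ∈ Ioo a b, MeasurableSet {x : ℝ | ψ y < (x:EReal)} := by
    intro y hy
    rcases hsets y hy with ⟨_, he⟩ | ⟨r, _, he⟩
    · rw [he]; exact MeasurableSet.univ
    · rw [he]; exact measurableSet_Ioi
  have hsec : ∀ y : ℝ, (fun x => T.indicator F (x, y)) =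
      if y ∈ Ioo a b then
        (fun x => ({x : ℝ | ψ y < (x:EReal)}).indicator
          (fun x => A y * ENNReal.ofReal (Real.exp (2*σ*x))) x)
      else (fun _ => 0) := by
    intro y
    split_ifs with hy
    · funext x
      by_cases hx : ψ y < (x : EReal)
      · rw [indicator_of_mem (show (x,y) ∈ T from ⟨hy, hx⟩),
          indicator_of_mem (show x ∈ {x : ℝ | ψ y < (x:EReal)} from hx)]
      · rw [indicator_of_notMem (show (x,y) ∉ T from fun hc => hx hc.2),
          indicator_of_notMem (show x ∉ {x : ℝ | ψ y < (x:EReal)} from hx)]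
    · funext x
      exact indicator_of_notMem (fun hc => hy hc.1) _
  have hAne_top : ∀ y, A y ≠ ⊤ := fun y => ENNReal.ofReal_ne_top
  have hAne_0 : ∀ y, A y ≠ 0 := fun y => by
    simp [hAdef, Real.exp_pos]
  have hJfun : (fun y => ∫⁻ x, T.indicator F (x,y)) =
      (Ioo a b).indicator (fun y => A y * J y) := by
    funext y
    rw [hsec y]
    split_ifs with hy
    · rw [indicator_of_mem hy, lintegral_indicator (hSymeas y hy)]
      exact lintegral_const_mul' _ _ (hAne_top y)
    · rw [indicator_of_notMem hy]
      simp
  have hFmeas : Measurable F := by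
    refine Measurable.mul (f := fun p : ℝ × ℝ => ENNReal.ofReal (Real.exp (-(2*τ) * p.2)))
      (g := fun p : ℝ × ℝ => ENNReal.ofReal (Real.exp (2*σ*p.1))) ?_ ?_
    · exact ((measurable_snd.const_mul (-(2*τ))).exp).ennreal_ofReal
    · exact ((measurable_fst.const_mul (2*σ)).exp).ennreal_ofReal
  have h4 : (∫⁻ p in T, F p ∂((volume : Measure ℝ).prod volume))
      = ∫⁻ y in Ioo a b, A y * J y := by
    rw [← lintegral_indicator hTmeas]
    rw [lintegral_prod_symm _ (hFmeas.indicator hTmeas).aemeasurable]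
    rw [show (fun y => ∫⁻ x, T.indicator F (x,y)) =
      (Ioo a b).indicator (fun y => A y * J y) from hJfun]
    rw [lintegral_indicator measurableSet_Ioo]
  have hDfinal : dirichletIntegral (fun z => Complex.exp (lam * h z))
      = c2 * ∫⁻ y in Ioo a b, A y * J y := by
    rw [hD, h3, h4]
  -- Step 5 : case analysis on σ
  rcases lt_or_ge σ 0 with hσneg | hσpos
  · -- σ < 0
    set C : ℝ≥0∞ := ENNReal.ofReal ((-(2*σ))⁻¹) with hCdef
    have hCne0 : C ≠ 0 := by
      have h8 : (0:ℝ) < (-(2*σ))⁻¹ := inv_pos.2 (by linarith)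
      exact (ENNReal.ofReal_pos.2 h8).ne'
    have hCnetop : C ≠ ⊤ := ENNReal.ofReal_ne_top
    have hJval : ∀ y ∈ Ioo a b,
        J y = C * EReal.exp (((2*σ : ℝ) : EReal) * ψ y) := by
      intro y hy
      rcases hsets y hy with ⟨hbot, he⟩ | ⟨r, hr, he⟩
      · rw [hJdef]
        simp only
        rw [he, hbot, Measure.restrict_univ, exp_lint_univ_top σ,
          EReal.coe_mul_bot_of_neg (by linarith : (2*σ:ℝ) < 0)]
        rw [EReal.exp_top, ENNReal.mul_top hCne0]
      · rw [hJdef]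
        simp only
        rw [he, hr, inner_neg hσneg r, ← EReal.coe_mul, EReal.exp_coe,
          div_eq_mul_inv, ENNReal.ofReal_mul (Real.exp_nonneg _), mul_comm]
    have hcongr : (∫⁻ y in Ioo a b, A y * J y)
        = ∫⁻ y in Ioo a b, A y * (C * EReal.exp (((2*σ : ℝ) : EReal) * ψ y)) :=
      setLIntegral_congr_fun measurableSet_Ioo
        (fun y hy => by rw [hJval y hy])
    set K : ℝ := 2 * |τ| * (|a| + |b|) with hKdef
    have hbound : ∀ y ∈ Ioo a b, ENNReal.ofReal (Real.exp (-K)) ≤ A y ∧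
        A y ≤ ENNReal.ofReal (Real.exp K) := by
      intro y hy
      have hy1 : |(-(2*τ)) * y| ≤ K := by
        rw [abs_mul, abs_neg, abs_mul]
        have hya : |y| ≤ |a| + |b| := by
          rw [abs_le]
          constructor
          · have := hy.1
            have := neg_abs_le a
            linarith [abs_nonneg b]
          · have := hy.2
            have := le_abs_self b
            linarith [abs_nonneg a]
        calc |2| * |τ| * |y| ≤ |2| * |τ| * (|a| + |b|) := by
              apply mul_le_mul_of_nonneg_left hya (by positivity)
          _ = K := by rw [hKdef]; norm_num
      obtain ⟨hl, hr⟩ := abs_le.1 hy1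
      constructor
      · exact ENNReal.ofReal_le_ofReal (Real.exp_le_exp.2 hl)
      · exact ENNReal.ofReal_le_ofReal (Real.exp_le_exp.2 hr)
    set m : ℝ≥0∞ := ENNReal.ofReal (Real.exp (-K)) with hmdef
    set M : ℝ≥0∞ := ENNReal.ofReal (Real.exp K) with hMdef
    have hmne0 : m ≠ 0 := by simp [hmdef, Real.exp_pos, ENNReal.ofReal_pos]
    have hMnetop : M ≠ ⊤ := ENNReal.ofReal_ne_top
    have hmnetop : m ≠ ⊤ := ENNReal.ofReal_ne_top
    have hupper : (∫⁻ y in Ioo a b, A y * (C * EReal.exp (((2*σ : ℝ) : EReal) * ψ y)))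
        ≤ M * (C * Int σ) := by
      calc (∫⁻ y in Ioo a b, A y * (C * EReal.exp (((2*σ : ℝ) : EReal) * ψ y)))
          ≤ ∫⁻ y in Ioo a b, M * (C * EReal.exp (((2*σ : ℝ) : EReal) * ψ y)) :=
            setLIntegral_mono' measurableSet_Ioo fun y hy =>
              mul_le_mul_of_nonneg_right (hbound y hy).2 (zero_le)
        _ = M * ∫⁻ y in Ioo a b, C * EReal.exp (((2*σ : ℝ) : EReal) * ψ y) :=
            lintegral_const_mul' _ _ hMnetop
        _ = M * (C * Int σ) := by rw [lintegral_const_mul' _ _ hCnetop]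
    have hlower : m * (C * Int σ)
        ≤ ∫⁻ y in Ioo a b, A y * (C * EReal.exp (((2*σ : ℝ) : EReal) * ψ y)) := by
      calc m * (C * Int σ)
          = ∫⁻ y in Ioo a b, m * (C * EReal.exp (((2*σ : ℝ) : EReal) * ψ y)) := by
            rw [lintegral_const_mul' _ _ hmnetop, lintegral_const_mul' _ _ hCnetop]
        _ ≤ ∫⁻ y in Ioo a b, A y * (C * EReal.exp (((2*σ : ℝ) : EReal) * ψ y)) :=
            setLIntegral_mono' measurableSet_Ioo fun y hy =>
              mul_le_mul_of_nonneg_right (hbound y hy).1 (zero_le)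
    have hDiff : dirichletIntegral (fun z => Complex.exp (lam * h z)) < ⊤ ↔ Int σ < ⊤ := by
      rw [hDfinal, hcongr]
      constructor
      · intro hfin
        by_contra htop
        rw [not_lt, top_le_iff] at htop
        have : m * (C * Int σ) = ⊤ := by
          rw [htop, ENNReal.mul_top hCne0, ENNReal.mul_top hmne0]
        have h5 : (⊤:ℝ≥0∞) ≤ ∫⁻ y in Ioo a b,
            A y * (C * EReal.exp (((2*σ : ℝ) : EReal) * ψ y)) := this ▸ hlower
        rw [top_le_iff.1 h5] at hfin
        rw [ENNReal.mul_top hc2ne0] at hfin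
        exact lt_irrefl _ hfin
      · intro hfin
        have h6 : (∫⁻ y in Ioo a b, A y * (C * EReal.exp (((2*σ : ℝ) : EReal) * ψ y)))
            < ⊤ :=
          lt_of_le_of_lt hupper (ENNReal.mul_lt_top hMnetop.lt_top
            (ENNReal.mul_lt_top hCnetop.lt_top hfin).ne.lt_top)
        exact ENNReal.mul_lt_top hc2netop.lt_top h6
    rw [hDiff]
    have := hSchar σ
    constructor
    · intro hfin
      exact (hSchar σ).1 ⟨hσneg, hfin⟩
    · intro hstrip
      exact ((hSchar σ).2 hstrip).2
  · -- σ ≥ 0 : both sides false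
    have hJtop : ∀ y ∈ Ioo a b, J y = ⊤ := by
      intro y hy
      rcases hsets y hy with ⟨_, he⟩ | ⟨r, _, he⟩
      · rw [hJdef]; simp only; rw [he, Measure.restrict_univ]
        exact exp_lint_univ_top σ
      · rw [hJdef]; simp only; rw [he]
        exact exp_lint_Ioi_top hσpos r
    have hItop : (∫⁻ y in Ioo a b, A y * J y) = ⊤ := by
      have hcongr2 : (∫⁻ y in Ioo a b, A y * J y) = ∫⁻ _ in Ioo a b, (⊤:ℝ≥0∞) :=
        setLIntegral_congr_fun measurableSet_Ioo (fun y hy => by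
          rw [hJtop y hy, ENNReal.mul_top (hAne_0 y)])
      rw [hcongr2, setLIntegral_const]
      rw [ENNReal.top_mul]
      simp only [Real.volume_Ioo, ne_eq, ENNReal.ofReal_eq_zero, not_le]
      linarith
    rw [hDfinal, hItop, ENNReal.mul_top hc2ne0]
    simp only [lt_self_iff_false, false_iff, not_and, not_lt]
    intro _
    linarith
end
end

section
/- Let a < b be real numbers, let ψ : (a,b) → [-∞,+∞) be upper semicontinuous, let Ω = {x+iy ∈ ℂ : a < y < b, x > ψ(y)}, let h be a Koenigs map onto Ω, and set c_Ω := inf{c ∈ (-∞,0) : ∫_a^b e^{2cψ(y)} dy < ∞}. Suppose this set is nonempty, c_Ω ∈ (-∞,0), and ∫_a^b e^{2c_Ω ψ(y)} dy < ∞. Then for every λ ∈ ℂ with λ ≠ 0 one has D(e^{λh}) < ∞ if and only if c_Ω ≤ Re λ < 0; that is, the point spectrum on the Dirichlet space equals the half-open vertical strip {c_Ω ≤ Re λ < 0} together with {0}. (Theorem 1.1(d).) -/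
open MeasureTheory Set Complex Metric
open scoped ENNReal NNReal

noncomputable section

namespace DirichletSpectrumAux

lemma ofReal_norm_eq_coe_nnnorm {E : Type*} [SeminormedAddGroup E] (x : E) :
    ENNReal.ofReal ‖x‖ = (‖x‖₊ : ℝ≥0∞) :=
  ENNReal.ofReal_eq_coe_nnreal (norm_nonneg x)

lemma det_cmul (d : ℂ) :
    ((ContinuousLinearMap.smulRight (1 : ℂ →L[ℂ] ℂ) d).restrictScalars ℝ).det
      = Complex.normSq d := by
  have h1 : (((ContinuousLinearMap.smulRight (1 : ℂ →L[ℂ] ℂ) d).restrictScalars ℝ) :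
      ℂ →ₗ[ℝ] ℂ) = Algebra.lmul ℝ ℂ d := by
    ext w
    simp [mul_comm]
  show LinearMap.det _ = _
  rw [h1, ← Algebra.norm_apply, Algebra.norm_complex_apply]

lemma change_var (h : ℂ → ℂ) (Ω : Set ℂ) (hK : IsKoenigsMap h Ω) (g : ℂ → ℝ≥0∞) :
    ∫⁻ w in Ω, g w = ∫⁻ z in ball (0:ℂ) 1, (‖deriv h z‖₊ : ℝ≥0∞) ^ 2 * g (h z) := by
  obtain ⟨hdiff, hinj, him⟩ := hK
  have hder : ∀ z ∈ ball (0:ℂ) 1, HasFDerivWithinAt h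
      (((ContinuousLinearMap.smulRight (1 : ℂ →L[ℂ] ℂ) (deriv h z)).restrictScalars ℝ))
      (ball (0:ℂ) 1) z := by
    intro z hz
    have hd : DifferentiableAt ℂ h z := hdiff.differentiableAt (isOpen_ball.mem_nhds hz)
    exact (hd.hasDerivAt.hasFDerivAt.restrictScalars ℝ).hasFDerivWithinAt
  rw [← him, lintegral_image_eq_lintegral_abs_det_fderiv_mul volume measurableSet_ball hder hinj g]
  refine setLIntegral_congr_fun measurableSet_ball (fun z hz => ?_)
  rw [det_cmul, _root_.abs_of_nonneg (Complex.normSq_nonneg _), Complex.normSq_eq_norm_sq,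
    ENNReal.ofReal_pow (norm_nonneg _), ofReal_norm_eq_coe_nnnorm]

lemma lemmaA (h : ℂ → ℂ) (Ω : Set ℂ) (hK : IsKoenigsMap h Ω) (lam : ℂ) :
    dirichletIntegral (fun z => Complex.exp (lam * h z))
      = (‖lam‖₊ : ℝ≥0∞) ^ 2 * ∫⁻ w in Ω, ENNReal.ofReal (Real.exp (2 * (lam * w).re)) := by
  rw [dirichletIntegral,
    change_var h Ω hK (fun w => ENNReal.ofReal (Real.exp (2 * (lam * w).re))),
    ← lintegral_const_mul' _ _ (by simp : ((‖lam‖₊ : ℝ≥0∞) ^ 2) ≠ ⊤)]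
  refine setLIntegral_congr_fun measurableSet_ball (fun z hz => ?_)
  have hh : DifferentiableAt ℂ h z := hK.1.differentiableAt (isOpen_ball.mem_nhds hz)
  have hd : deriv (fun z => Complex.exp (lam * h z)) z
      = Complex.exp (lam * h z) * (lam * deriv h z) :=
    ((hh.hasDerivAt.const_mul lam).cexp).deriv
  rw [hd]
  have e2 : Real.exp (2 * (lam * h z).re)
      = Real.exp ((lam * h z).re) * Real.exp ((lam * h z).re) := by
    rw [two_mul, Real.exp_add]
  have hnorm : ‖Complex.exp (lam * h z) * (lam * deriv h z)‖ ^ 2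
      = Real.exp (2 * (lam * h z).re) * (‖lam‖ ^ 2 * ‖deriv h z‖ ^ 2) := by
    rw [norm_mul, norm_mul, Complex.norm_exp, e2]
    ring
  rw [← ofReal_norm_eq_coe_nnnorm, ← ENNReal.ofReal_pow (norm_nonneg _), hnorm]
  rw [ENNReal.ofReal_mul (Real.exp_nonneg _), ENNReal.ofReal_mul (by positivity),
    ENNReal.ofReal_pow (norm_nonneg _), ENNReal.ofReal_pow (norm_nonneg _),
    ofReal_norm_eq_coe_nnnorm, ofReal_norm_eq_coe_nnnorm]
  ring

lemma exp_integral_Ioi (c r : ℝ) (hc : c < 0) :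
    ∫⁻ x in Ioi r, ENNReal.ofReal (Real.exp (2 * c * x))
      = ENNReal.ofReal (Real.exp (2 * c * r) * (-(2 * c))⁻¹) := by
  have h2c : 2 * c < 0 := by linarith
  have h2c' : (2 : ℝ) * c ≠ 0 := ne_of_lt h2c
  set g : ℝ → ℝ := fun x => (2 * c)⁻¹ * Real.exp (2 * c * x) with hg
  have hderiv : ∀ x ∈ Ici r, HasDerivAt g (Real.exp (2 * c * x)) x := by
    intro x _
    have h1 : HasDerivAt (fun x : ℝ => 2 * c * x) (2 * c) x := by
      simpa using (hasDerivAt_id x).const_mul (2 * c)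
    have h3 := (h1.exp).const_mul ((2 * c)⁻¹)
    refine h3.congr_deriv ?_
    rw [mul_comm (Real.exp _), ← mul_assoc, inv_mul_cancel₀ h2c', one_mul]
  have htend : Filter.Tendsto g Filter.atTop (nhds 0) := by
    have h1 : Filter.Tendsto (fun x : ℝ => 2 * c * x) Filter.atTop Filter.atBot :=
      (Filter.tendsto_const_mul_atBot_of_neg h2c).mpr Filter.tendsto_id
    have h2 := Real.tendsto_exp_atBot.comp h1
    have h3 := h2.const_mul ((2 * c)⁻¹)
    rw [mul_zero] at h3
    exact h3
  have hint : IntegrableOn (fun x => Real.exp (2 * c * x)) (Ioi r) :=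
    integrableOn_Ioi_deriv_of_nonneg' hderiv (fun x _ => Real.exp_nonneg _) htend
  have hval : ∫ x in Ioi r, Real.exp (2 * c * x) = 0 - g r :=
    integral_Ioi_of_hasDerivAt_of_nonneg' hderiv (fun x _ => Real.exp_nonneg _) htend
  rw [← ofReal_integral_eq_lintegral_ofReal hint
    (Filter.Eventually.of_forall fun x => Real.exp_nonneg _), hval]
  congr 1
  rw [hg, zero_sub, inv_neg, mul_neg]
  simp only []
  ring

lemma lint_exp_top (c : ℝ) (s t : Set ℝ) (hsub : t ⊆ s)
    (hone : ∀ x ∈ t, (1 : ℝ≥0∞) ≤ ENNReal.ofReal (Real.exp (2 * c * x)))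
    (hvol : volume t = ⊤) :
    ∫⁻ x in s, ENNReal.ofReal (Real.exp (2 * c * x)) = ⊤ := by
  refine le_antisymm le_top ?_
  calc (⊤ : ℝ≥0∞) = ∫⁻ _ in t, 1 := by simp [hvol]
  _ ≤ ∫⁻ x in t, ENNReal.ofReal (Real.exp (2 * c * x)) :=
      setLIntegral_mono ((Real.measurable_exp.comp
        (measurable_id'.const_mul (2*c))).ennreal_ofReal) hone
  _ ≤ ∫⁻ x in s, ENNReal.ofReal (Real.exp (2 * c * x)) :=
      lintegral_mono' (Measure.restrict_mono hsub le_rfl) le_rfl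

lemma slice_eval_neg (c : ℝ) (hc : c < 0) (t : EReal) :
    ∫⁻ x in {x : ℝ | t < (x : EReal)}, ENNReal.ofReal (Real.exp (2 * c * x))
      = EReal.exp (((2 * c : ℝ) : EReal) * t) * ENNReal.ofReal (-(2 * c))⁻¹ := by
  have h2c : (2 * c : ℝ) < 0 := by linarith
  have hKne : ENNReal.ofReal (-(2 * c))⁻¹ ≠ 0 := by
    simp only [ne_eq, ENNReal.ofReal_eq_zero, not_le]
    exact inv_pos.mpr (by linarith)
  induction t with
  | bot =>
    rw [EReal.coe_mul_bot_of_neg (by exact_mod_cast h2c), EReal.exp_top, ENNReal.top_mul hKne]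
    refine lint_exp_top c _ (Iic 0) (fun x _ => by simp [EReal.bot_lt_coe]) ?_ (by simp)
    intro x hx
    rw [show (1 : ℝ≥0∞) = ENNReal.ofReal 1 by simp]
    exact ENNReal.ofReal_le_ofReal (Real.one_le_exp (by nlinarith [hx.out]))
  | coe r =>
    have hset : {x : ℝ | (r : EReal) < (x : EReal)} = Ioi r := by
      ext x; simp [EReal.coe_lt_coe_iff]
    rw [hset, exp_integral_Ioi c r hc, ← EReal.coe_mul, EReal.exp_coe,
      ← ENNReal.ofReal_mul (Real.exp_nonneg _)]
  | top =>
    have hset : {x : ℝ | (⊤ : EReal) < (x : EReal)} = ∅ := by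
      ext x; simp
    rw [hset, EReal.coe_mul_top_of_neg (by exact_mod_cast h2c), EReal.exp_bot, zero_mul]
    simp

lemma slice_eval_nonneg (c : ℝ) (hc : 0 ≤ c) (t : EReal) (ht : t < ⊤) :
    ∫⁻ x in {x : ℝ | t < (x : EReal)}, ENNReal.ofReal (Real.exp (2 * c * x)) = ⊤ := by
  have hone : ∀ M : ℝ, ∀ x ∈ Ioi (max M 0), (1 : ℝ≥0∞) ≤ ENNReal.ofReal (Real.exp (2 * c * x)) := by
    intro M x hx
    have hx0 : 0 < x := lt_of_le_of_lt (le_max_right M 0) hx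
    rw [show (1 : ℝ≥0∞) = ENNReal.ofReal 1 by simp]
    exact ENNReal.ofReal_le_ofReal (Real.one_le_exp (by nlinarith))
  induction t with
  | bot =>
    exact lint_exp_top c _ (Ioi (max 0 0)) (fun x _ => by simp [EReal.bot_lt_coe])
      (hone 0) (by simp)
  | coe r =>
    refine lint_exp_top c _ (Ioi (max r 0)) ?_ (hone r) (by simp)
    intro x hx
    have : r < x := lt_of_le_of_lt (le_max_left r 0) hx
    simpa [EReal.coe_lt_coe_iff] using this
  | top => exact absurd ht (lt_irrefl _)

lemma slice_measurable (t : EReal) : MeasurableSet {x : ℝ | t < (x : EReal)} := by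
  induction t with
  | bot => simp [EReal.bot_lt_coe]
  | coe r =>
    have : {x : ℝ | (r : EReal) < (x : EReal)} = Ioi r := by ext x; simp [EReal.coe_lt_coe_iff]
    rw [this]; exact measurableSet_Ioi
  | top => simp

lemma lemmaB (a b : ℝ) (ψ : ℝ → EReal) (Ω : Set ℂ)
    (hΩ : Ω = {w : ℂ | w.im ∈ Ioo a b ∧ ψ w.im < (w.re : EReal)})
    (hΩm : MeasurableSet Ω) (c : ℝ) :
    ∫⁻ w in Ω, ENNReal.ofReal (Real.exp (2 * c * w.re))
      = ∫⁻ y in Ioo a b, ∫⁻ x in {x : ℝ | ψ y < (x : EReal)},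
          ENNReal.ofReal (Real.exp (2 * c * x)) := by
  set g : ℂ → ℝ≥0∞ := fun w => ENNReal.ofReal (Real.exp (2 * c * w.re)) with hg
  set Ω' : Set (ℝ × ℝ) := Complex.measurableEquivRealProd.symm ⁻¹' Ω with hΩ'
  have hΩ'm : MeasurableSet Ω' := hΩm.preimage Complex.measurableEquivRealProd.symm.measurable
  have hgm : Measurable g := (Real.measurable_exp.comp
    ((Complex.measurable_re).const_mul (2 * c))).ennreal_ofReal
  have step1 : ∫⁻ w in Ω, g w = ∫⁻ w, Ω.indicator g w := (lintegral_indicator hΩm g).symm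
  have step2 : ∫⁻ w, Ω.indicator g w
      = ∫⁻ p : ℝ × ℝ, Ω.indicator g (Complex.measurableEquivRealProd.symm p) :=
    ((Complex.volume_preserving_equiv_real_prod.symm _).lintegral_comp
      (hgm.indicator hΩm)).symm
  have hmem : ∀ p : ℝ × ℝ, Complex.measurableEquivRealProd.symm p ∈ Ω ↔
      (p.2 ∈ Ioo a b ∧ ψ p.2 < (p.1 : EReal)) := by
    intro p
    rw [hΩ]
    exact Iff.rfl
  have step3 : ∀ p : ℝ × ℝ, Ω.indicator g (Complex.measurableEquivRealProd.symm p)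
      = Ω'.indicator (fun p : ℝ × ℝ => ENNReal.ofReal (Real.exp (2 * c * p.1))) p := by
    intro p
    by_cases hp : p ∈ Ω'
    · rw [Set.indicator_of_mem hp,
        Set.indicator_of_mem (show Complex.measurableEquivRealProd.symm p ∈ Ω from hp)]
      rfl
    · rw [Set.indicator_of_notMem hp, Set.indicator_of_notMem (by exact hp)]
  have hF : Measurable (Ω'.indicator (fun p : ℝ × ℝ => ENNReal.ofReal (Real.exp (2 * c * p.1)))) :=
    ((Real.measurable_exp.comp (measurable_fst.const_mul (2 * c))).ennreal_ofReal).indicator hΩ'm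
  have step4 : ∫⁻ p : ℝ × ℝ, Ω'.indicator (fun p : ℝ × ℝ =>
        ENNReal.ofReal (Real.exp (2 * c * p.1))) p
      = ∫⁻ y : ℝ, ∫⁻ x : ℝ, Ω'.indicator (fun p : ℝ × ℝ =>
        ENNReal.ofReal (Real.exp (2 * c * p.1))) (x, y) := by
    rw [MeasureTheory.Measure.volume_eq_prod, lintegral_prod_symm _ hF.aemeasurable]
  have step5 : ∀ y : ℝ, (∫⁻ x : ℝ, Ω'.indicator (fun p : ℝ × ℝ =>
        ENNReal.ofReal (Real.exp (2 * c * p.1))) (x, y))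
      = (Ioo a b).indicator (fun y => ∫⁻ x in {x : ℝ | ψ y < (x : EReal)},
          ENNReal.ofReal (Real.exp (2 * c * x))) y := by
    intro y
    by_cases hy : y ∈ Ioo a b
    · rw [Set.indicator_of_mem hy, ← lintegral_indicator (slice_measurable (ψ y))]
      congr 1
      funext x
      have hmem2 : (x, y) ∈ Ω' ↔ (y ∈ Ioo a b ∧ ψ y < (x : EReal)) := hmem (x, y)
      by_cases hx : ψ y < (x : EReal)
      · rw [Set.indicator_of_mem (hmem2.mpr ⟨hy, hx⟩),
          Set.indicator_of_mem (show x ∈ {x : ℝ | ψ y < (x : EReal)} from hx)]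
      · rw [Set.indicator_of_notMem (fun hc => hx (hmem2.mp hc).2),
          Set.indicator_of_notMem (show x ∉ {x : ℝ | ψ y < (x : EReal)} from hx)]
    · rw [Set.indicator_of_notMem hy]
      have : ∀ x : ℝ, Ω'.indicator (fun p : ℝ × ℝ =>
          ENNReal.ofReal (Real.exp (2 * c * p.1))) (x, y) = 0 := by
        intro x
        exact Set.indicator_of_notMem (s := Ω') (fun hc => hy ((hmem (x, y)).mp hc).1) _
      simp [this]
  rw [step1, step2]
  simp_rw [step3]
  rw [step4]
  simp_rw [step5]
  rw [lintegral_indicator measurableSet_Ioo]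

end DirichletSpectrumAux

open DirichletSpectrumAux

/-- **Theorem 1.1(d).** With `c_Ω = inf{c < 0 : ∫_a^b e^{2cψ} dy < ∞}` finite and negative, if
`∫_a^b e^{2 c_Ω ψ(y)} dy < ∞` then the nonzero point spectrum on the Dirichlet space is the
half-open vertical strip `{c_Ω ≤ Re λ < 0}`. -/
theorem dirichlet_spectrum_hyperbolic_halfopen_strip
    (a b : ℝ) (hab : a < b) (ψ : ℝ → EReal)
    (hψ_usc : UpperSemicontinuousOn ψ (Ioo a b))
    (hψ_lt_top : ∀ y ∈ Ioo a b, ψ y < ⊤)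
    (Ω : Set ℂ)
    (hΩ : Ω = {w : ℂ | w.im ∈ Ioo a b ∧ ψ w.im < (w.re : EReal)})
    (h : ℂ → ℂ) (hKoenigs : IsKoenigsMap h Ω)
    (S : Set ℝ)
    (hS : S = {c : ℝ | c < 0 ∧
      ∫⁻ y in Ioo a b, EReal.exp (((2 * c : ℝ) : EReal) * ψ y) < ⊤})
    (hSne : S.Nonempty) (hSbdd : BddBelow S) (hcΩ_neg : sInf S < 0)
    (hcΩ_int : ∫⁻ y in Ioo a b, EReal.exp (((2 * sInf S : ℝ) : EReal) * ψ y) < ⊤)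
    (lam : ℂ) (hlam : lam ≠ 0) :
    dirichletIntegral (fun z => Complex.exp (lam * h z)) < ⊤ ↔
      (sInf S ≤ lam.re ∧ lam.re < 0) := by
  have hΩm : MeasurableSet Ω := by
    rw [← hKoenigs.2.2]
    exact MeasurableSet.image_of_continuousOn_injOn measurableSet_ball
      hKoenigs.1.continuousOn hKoenigs.2.1
  set J : ℝ → ℝ≥0∞ := fun c => ∫⁻ w in Ω, ENNReal.ofReal (Real.exp (2 * c * w.re)) with hJ
  set Jl : ℝ≥0∞ := ∫⁻ w in Ω, ENNReal.ofReal (Real.exp (2 * (lam * w).re)) with hJl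
  set M : ℝ := 2 * |lam.im| * (|a| + |b|) with hM
  have hDeq : dirichletIntegral (fun z => Complex.exp (lam * h z))
      = (‖lam‖₊ : ℝ≥0∞) ^ 2 * Jl := lemmaA h Ω hKoenigs lam
  -- pointwise comparison on Ω
  have hbd : ∀ w ∈ Ω, |lam.im * w.im| ≤ |lam.im| * (|a| + |b|) := by
    intro w hw
    rw [hΩ] at hw
    obtain ⟨⟨hw1, hw2⟩, -⟩ := hw
    have him : |w.im| ≤ |a| + |b| := by
      rw [abs_le]
      constructor
      · have := neg_abs_le a; nlinarith [abs_nonneg b]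
      · have := le_abs_self b; nlinarith [abs_nonneg a]
    rw [abs_mul]
    exact mul_le_mul_of_nonneg_left him (abs_nonneg _)
  have hb1 : Jl ≤ ENNReal.ofReal (Real.exp M) * J lam.re := by
    rw [hJl, hJ, ← lintegral_const_mul' _ _ (by simp : ENNReal.ofReal (Real.exp M) ≠ ⊤)]
    refine setLIntegral_mono (measurable_const.mul ((Real.measurable_exp.comp
      ((Complex.measurable_re).const_mul (2 * lam.re))).ennreal_ofReal)) ?_
    intro w hw
    rw [← ENNReal.ofReal_mul (Real.exp_nonneg _), ← Real.exp_add]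
    refine ENNReal.ofReal_le_ofReal (Real.exp_le_exp.mpr ?_)
    have h1 := (abs_le.mp (hbd w hw)).1
    rw [Complex.mul_re, hM]
    nlinarith [abs_nonneg lam.im, abs_nonneg a]
  have hb2 : J lam.re ≤ ENNReal.ofReal (Real.exp M) * Jl := by
    rw [hJl, hJ, ← lintegral_const_mul' _ _ (by simp : ENNReal.ofReal (Real.exp M) ≠ ⊤)]
    refine setLIntegral_mono (measurable_const.mul ((Real.measurable_exp.comp
      (((Complex.measurable_re.comp (measurable_id'.const_mul lam))).const_mul 2)).ennreal_ofReal))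
      ?_
    intro w hw
    rw [← ENNReal.ofReal_mul (Real.exp_nonneg _), ← Real.exp_add]
    refine ENNReal.ofReal_le_ofReal (Real.exp_le_exp.mpr ?_)
    have h1 := (abs_le.mp (hbd w hw)).2
    rw [Complex.mul_re, hM]
    nlinarith [abs_nonneg lam.im, abs_nonneg a]
  have hlamne : ((‖lam‖₊ : ℝ≥0∞) ^ 2) ≠ 0 := by simp [hlam]
  have hfin1 : dirichletIntegral (fun z => Complex.exp (lam * h z)) < ⊤ ↔ Jl < ⊤ := by
    rw [hDeq]
    constructor
    · intro hd
      refine lt_top_iff_ne_top.2 fun hj => ?_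
      rw [hj, ENNReal.mul_top hlamne] at hd
      exact absurd hd (lt_irrefl _)
    · intro hj
      exact ENNReal.mul_lt_top (ENNReal.pow_lt_top ENNReal.coe_lt_top) hj
  have hfin2 : Jl < ⊤ ↔ J lam.re < ⊤ := by
    constructor
    · intro hj
      exact lt_of_le_of_lt hb2 (ENNReal.mul_lt_top ENNReal.ofReal_lt_top hj)
    · intro hj
      exact lt_of_le_of_lt hb1 (ENNReal.mul_lt_top ENNReal.ofReal_lt_top hj)
  have hJeq : ∀ c : ℝ, J c = ∫⁻ y in Ioo a b, ∫⁻ x in {x : ℝ | ψ y < (x : EReal)},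
      ENNReal.ofReal (Real.exp (2 * c * x)) := fun c => lemmaB a b ψ Ω hΩ hΩm c
  have hneg : ∀ c : ℝ, c < 0 →
      J c = (∫⁻ y in Ioo a b, EReal.exp (((2 * c : ℝ) : EReal) * ψ y))
        * ENNReal.ofReal (-(2 * c))⁻¹ := by
    intro c hc
    rw [hJeq c, setLIntegral_congr_fun measurableSet_Ioo
      (fun y _ => slice_eval_neg c hc (ψ y))]
    exact lintegral_mul_const' _ _ (by simp)
  have hnonneg : ∀ c : ℝ, 0 ≤ c → J c = ⊤ := by
    intro c hc
    rw [hJeq c, setLIntegral_congr_fun measurableSet_Ioo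
      (fun y hy => slice_eval_nonneg c hc (ψ y) (hψ_lt_top y hy)),
      setLIntegral_const]
    have hv : volume (Ioo a b) ≠ 0 := by
      rw [Real.volume_Ioo]
      simp only [ne_eq, ENNReal.ofReal_eq_zero, not_le]
      linarith
    exact ENNReal.top_mul hv
  have hvolIoo : (volume (Ioo a b)) < ⊤ := by
    rw [Real.volume_Ioo]
    exact ENNReal.ofReal_lt_top
  have hKne0 : ∀ c : ℝ, c < 0 → ENNReal.ofReal (-(2 * c))⁻¹ ≠ 0 := by
    intro c hc
    simp only [ne_eq, ENNReal.ofReal_eq_zero, not_le]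
    exact inv_pos.mpr (by linarith)
  -- the bridge between J and S
  have hmemS : ∀ c : ℝ, c < 0 → (J c < ⊤ ↔ sInf S ≤ c) := by
    intro c hc
    rw [hneg c hc]
    constructor
    · intro hJc
      have hI : (∫⁻ y in Ioo a b, EReal.exp (((2 * c : ℝ) : EReal) * ψ y)) < ⊤ := by
        by_contra hI
        rw [not_lt, top_le_iff] at hI
        rw [hI, ENNReal.top_mul (hKne0 c hc)] at hJc
        exact absurd hJc (lt_irrefl _)
      exact csInf_le hSbdd (by rw [hS]; exact ⟨hc, hI⟩)
    · intro hle
      have hpt : ∀ y : ℝ, EReal.exp (((2 * c : ℝ) : EReal) * ψ y)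
          ≤ EReal.exp (((2 * sInf S : ℝ) : EReal) * ψ y) + 1 := by
        intro y
        have h2c : (2 * c : ℝ) < 0 := by linarith
        have h2c0 : (2 * sInf S : ℝ) < 0 := by linarith
        induction (ψ y) with
        | bot =>
          rw [EReal.coe_mul_bot_of_neg (by exact_mod_cast h2c),
            EReal.coe_mul_bot_of_neg (by exact_mod_cast h2c0), EReal.exp_top]
          simp
        | coe r =>
          rw [← EReal.coe_mul, ← EReal.coe_mul, EReal.exp_coe, EReal.exp_coe]
          rcases le_or_gt r 0 with hr | hr
          · refine le_trans (ENNReal.ofReal_le_ofReal (Real.exp_le_exp.mpr ?_)) le_self_add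
            nlinarith
          · refine le_trans ?_ le_add_self
            have hle1 : Real.exp (2 * c * r) ≤ 1 := Real.exp_le_one_iff.mpr (by nlinarith)
            calc ENNReal.ofReal (Real.exp (2 * c * r))
                ≤ ENNReal.ofReal 1 := ENNReal.ofReal_le_ofReal hle1
              _ = 1 := by simp
        | top =>
          rw [EReal.coe_mul_top_of_neg (by exact_mod_cast h2c), EReal.exp_bot]
          exact zero_le'
      have hI : (∫⁻ y in Ioo a b, EReal.exp (((2 * c : ℝ) : EReal) * ψ y)) < ⊤ := by
        calc (∫⁻ y in Ioo a b, EReal.exp (((2 * c : ℝ) : EReal) * ψ y))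
            ≤ ∫⁻ y in Ioo a b, (EReal.exp (((2 * sInf S : ℝ) : EReal) * ψ y) + 1) :=
              lintegral_mono fun y => hpt y
          _ = (∫⁻ y in Ioo a b, EReal.exp (((2 * sInf S : ℝ) : EReal) * ψ y))
              + ∫⁻ _ in Ioo a b, 1 := lintegral_add_right _ measurable_const
          _ < ⊤ := by
              refine ENNReal.add_lt_top.mpr ⟨hcΩ_int, ?_⟩
              rw [setLIntegral_const, one_mul]
              exact hvolIoo
      exact ENNReal.mul_lt_top hI ENNReal.ofReal_lt_top
  constructor
  · intro hD
    have hJl' := hfin1.mp hD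
    have hJc := hfin2.mp hJl'
    have hclt : lam.re < 0 := by
      by_contra hge
      push_neg at hge
      rw [hnonneg lam.re hge] at hJc
      exact absurd hJc (lt_irrefl _)
    exact ⟨(hmemS lam.re hclt).mp hJc, hclt⟩
  · rintro ⟨h1, h2⟩
    exact hfin1.mpr (hfin2.mpr ((hmemS lam.re h2).mpr h1))
end
end

section
/- Let Ω be a domain in ℂ that is convex in the positive direction and contained in a horizontal strip, and let h be a Koenigs map onto Ω. Suppose W(Ω) = ∫_{-∞}^0 ℓ_Ω(x) dx < ∞ and that for every M > 0 there is x_M < 0 such that ℓ_Ω(x) ≤ e^{2Mx} for all x < x_M (i.e. δ_Ω = lim_{x→-∞} log ℓ_Ω(x)/(2x) = +∞). Then for every λ ∈ ℂ with λ ≠ 0 one has D(e^{λh}) < ∞ if and only if Re λ < 0; that is, the point spectrum on the Dirichlet space equals {Re λ < 0} ∪ {0}. (Theorem 1.2(b).) -/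
open MeasureTheory Set Complex Metric
open scoped ENNReal NNReal

noncomputable section

/-- `Ω` is convex in the positive direction: `Ω + t ⊆ Ω` for all `t ≥ 0`. -/
def ConvexPosDir (Ω : Set ℂ) : Prop :=
  ∀ t : ℝ, 0 ≤ t → ∀ w ∈ Ω, w + (t : ℂ) ∈ Ω

/-- `ℓ_Ω(x)`: one-dimensional Lebesgue measure of the vertical slice `{y : x + iy ∈ Ω}`. -/
def sliceLen (Ω : Set ℂ) (x : ℝ) : ℝ≥0∞ :=
  volume {y : ℝ | (x : ℂ) + (y : ℂ) * Complex.I ∈ Ω}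

/-! ### Auxiliary lemmas -/

lemma aux_mk_mem (Ω : Set ℂ) (x y : ℝ) :
    (Complex.measurableEquivRealProd.symm (x, y) ∈ Ω) ↔ (x : ℂ) + (y : ℂ) * Complex.I ∈ Ω := by
  rw [Complex.measurableEquivRealProd_symm_apply]
  norm_num [Complex.mk_eq_add_mul_I]

lemma aux_sliceLen_meas (Ω : Set ℂ) (hΩ : MeasurableSet Ω) : Measurable (sliceLen Ω) := by
  have hS : MeasurableSet (Complex.measurableEquivRealProd.symm ⁻¹' Ω) :=
    Complex.measurableEquivRealProd.symm.measurable hΩ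
  have := measurable_measure_prodMk_left (ν := (volume : Measure ℝ)) hS
  convert this using 2 with x
  unfold sliceLen
  congr 1
  ext y
  simp [aux_mk_mem, Complex.mk_eq_add_mul_I]

lemma aux_lintegral_re_slice (Ω : Set ℂ) (hΩ : MeasurableSet Ω) (g : ℝ → ℝ≥0∞)
    (hg : Measurable g) :
    ∫⁻ w in Ω, g w.re = ∫⁻ x, g x * sliceLen Ω x := by
  have hF : Measurable (Ω.indicator fun w : ℂ => g w.re) :=
    (hg.comp Complex.measurable_re).indicator hΩ
  rw [← lintegral_indicator hΩ]
  rw [← (Complex.volume_preserving_equiv_real_prod.symm).lintegral_comp hF]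
  rw [MeasureTheory.Measure.volume_eq_prod, lintegral_prod
    (fun p : ℝ × ℝ => (Ω.indicator fun w : ℂ => g w.re) (Complex.measurableEquivRealProd.symm p))
    ((hF.comp Complex.measurableEquivRealProd.symm.measurable).aemeasurable)]
  congr 1
  ext x
  have : ∀ y : ℝ, (Ω.indicator (fun w : ℂ => g w.re)) (Complex.measurableEquivRealProd.symm (x, y))
      = ({y : ℝ | (x : ℂ) + (y : ℂ) * Complex.I ∈ Ω}).indicator (fun _ => g x) y := by
    intro y
    by_cases hy : (x : ℂ) + (y : ℂ) * Complex.I ∈ Ω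
    · rw [indicator_of_mem (show y ∈ {y : ℝ | (x : ℂ) + (y : ℂ) * Complex.I ∈ Ω} from hy),
        indicator_of_mem ((aux_mk_mem Ω x y).mpr hy)]
      rw [Complex.measurableEquivRealProd_symm_apply]
    · rw [indicator_of_notMem (show y ∉ {y : ℝ | (x : ℂ) + (y : ℂ) * Complex.I ∈ Ω} from hy),
        indicator_of_notMem (fun hc => hy ((aux_mk_mem Ω x y).mp hc))]
  simp_rw [this]
  have hsm : MeasurableSet {y : ℝ | (x : ℂ) + (y : ℂ) * Complex.I ∈ Ω} := by
    have : Continuous fun y : ℝ => (x : ℂ) + (y : ℂ) * Complex.I := by continuity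
    exact this.measurable hΩ
  rw [lintegral_indicator hsm, setLIntegral_const]
  rfl

lemma aux_det_mul_complex (c : ℂ) :
    ((ContinuousLinearMap.smulRight (1 : ℂ →L[ℂ] ℂ) c).restrictScalars ℝ).det
      = Complex.normSq c := by
  have h1 : ((ContinuousLinearMap.smulRight (1 : ℂ →L[ℂ] ℂ) c).restrictScalars ℝ).toLinearMap
      = Algebra.lmul ℝ ℂ c := by
    apply LinearMap.ext; intro z
    simp [mul_comm]
  rw [ContinuousLinearMap.det, h1, ← Algebra.norm_apply, Algebra.norm_complex_apply]

lemma aux_ofReal_normSq (c : ℂ) : ENNReal.ofReal (Complex.normSq c) = (‖c‖₊ : ℝ≥0∞) ^ 2 := by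
  rw [Complex.normSq_eq_norm_sq, ENNReal.ofReal_pow (norm_nonneg c), ofReal_norm]
  rfl

lemma aux_dirichlet_to_omega (Ω : Set ℂ) (h : ℂ → ℂ)
    (hdiff : DifferentiableOn ℂ h (ball 0 1)) (hinj : InjOn h (ball 0 1))
    (himg : h '' ball 0 1 = Ω) (lam : ℂ) :
    dirichletIntegral (fun z => Complex.exp (lam * h z))
      = ∫⁻ w in Ω, (‖lam * Complex.exp (lam * w)‖₊ : ℝ≥0∞) ^ 2 := by
  have hf' : ∀ z ∈ ball (0 : ℂ) 1, HasFDerivWithinAt h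
      ((ContinuousLinearMap.smulRight (1 : ℂ →L[ℂ] ℂ) (deriv h z)).restrictScalars ℝ)
      (ball 0 1) z := by
    intro z hz
    have hd := ((hdiff z hz).differentiableAt (isOpen_ball.mem_nhds hz)).hasDerivAt
    exact (hd.hasFDerivAt.restrictScalars ℝ).hasFDerivWithinAt
  rw [← himg, MeasureTheory.lintegral_image_eq_lintegral_abs_det_fderiv_mul volume
    measurableSet_ball hf' hinj]
  apply MeasureTheory.setLIntegral_congr_fun measurableSet_ball
  intro z hz
  have hd := ((hdiff z hz).differentiableAt (isOpen_ball.mem_nhds hz)).hasDerivAt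
  have hD : deriv (fun z => Complex.exp (lam * h z)) z
      = (lam * Complex.exp (lam * h z)) * deriv h z := by
    rw [((hd.const_mul lam).cexp).deriv]; ring
  beta_reduce
  rw [hD, aux_det_mul_complex, _root_.abs_of_nonneg (Complex.normSq_nonneg _), aux_ofReal_normSq]
  rw [nnnorm_mul]
  push_cast
  ring

lemma aux_nnnorm_exp_sq (ζ : ℂ) :
    ((‖Complex.exp ζ‖₊ : ℝ≥0∞)) ^ 2 = ENNReal.ofReal (Real.exp (2 * ζ.re)) := by
  rw [← enorm_eq_nnnorm, ← ofReal_norm, ← ENNReal.ofReal_pow (norm_nonneg _),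
    Complex.norm_exp, pow_two, ← Real.exp_add, ← two_mul]

/-- **Theorem 1.2(b).** If `W(Ω) < ∞` and `δ_Ω = lim_{x→-∞} log ℓ_Ω(x)/(2x) = +∞` (expressed by:
for every `M > 0`, `ℓ_Ω(x) ≤ e^{2Mx}` for all sufficiently negative `x`), then the point spectrum
on the Dirichlet space is `{Re λ < 0} ∪ {0}`. -/
theorem dirichlet_spectrum_hyperbolic_W_finite_delta_infinite
    (Ω : Set ℂ) (hopen : IsOpen Ω) (hconn : IsConnected Ω)
    (hconv : ConvexPosDir Ω)
    (hstrip : ∃ a b : ℝ, Ω ⊆ {w : ℂ | a < w.im ∧ w.im < b})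
    (h : ℂ → ℂ) (hKoenigs : IsKoenigsMap h Ω)
    (hW : ∫⁻ x in Iio (0 : ℝ), sliceLen Ω x < ⊤)
    (hδ : ∀ M : ℝ, 0 < M → ∃ xM : ℝ, xM < 0 ∧ ∀ x : ℝ, x < xM →
      sliceLen Ω x ≤ ENNReal.ofReal (Real.exp (2 * M * x)))
    (lam : ℂ) (hlam : lam ≠ 0) :
    dirichletIntegral (fun z => Complex.exp (lam * h z)) < ⊤ ↔ lam.re < 0 := by
  obtain ⟨hdiff, hinj, himg⟩ := hKoenigs
  obtain ⟨as, bs, hsub⟩ := hstrip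
  have hΩm : MeasurableSet Ω := hopen.measurableSet
  set a : ℝ := lam.re with ha
  have hg : Measurable fun x : ℝ => ENNReal.ofReal (Real.exp (2 * a * x)) :=
    ENNReal.measurable_ofReal.comp
      (Real.continuous_exp.comp (continuous_const.mul continuous_id)).measurable
  set I : ℝ≥0∞ := ∫⁻ x : ℝ, ENNReal.ofReal (Real.exp (2 * a * x)) * sliceLen Ω x with hI
  -- Step 1: reduce to finiteness of I
  have key : (dirichletIntegral (fun z => Complex.exp (lam * h z)) < ⊤) ↔ I < ⊤ := by
    rw [aux_dirichlet_to_omega Ω h hdiff hinj himg lam]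
    -- rewrite the integrand
    have hpoint : ∀ w : ℂ, ((‖lam * Complex.exp (lam * w)‖₊ : ℝ≥0∞)) ^ 2
        = (‖lam‖₊ : ℝ≥0∞) ^ 2 * ENNReal.ofReal (Real.exp (2 * (lam * w).re)) := by
      intro w
      rw [nnnorm_mul]
      push_cast
      rw [mul_pow, aux_nnnorm_exp_sq]
    simp_rw [hpoint]
    rw [lintegral_const_mul' _ _ (ENNReal.pow_ne_top ENNReal.coe_ne_top)]
    set K : ℝ≥0∞ := ∫⁻ w in Ω, ENNReal.ofReal (Real.exp (2 * (lam * w).re)) with hK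
    have hlam0 : ((‖lam‖₊ : ℝ≥0∞)) ^ 2 ≠ 0 := by
      apply pow_ne_zero
      simpa using hlam
    have h1 : (‖lam‖₊ : ℝ≥0∞) ^ 2 * K < ⊤ ↔ K < ⊤ := by
      constructor
      · intro hfin
        by_contra hKtop
        rw [not_lt, top_le_iff] at hKtop
        rw [hKtop, ENNReal.mul_top hlam0] at hfin
        exact absurd hfin (lt_irrefl _)
      · intro hfin
        exact ENNReal.mul_lt_top (ENNReal.pow_lt_top ENNReal.coe_lt_top) hfin
    rw [h1]
    -- compare K with J using the strip
    set B : ℝ := max |as| |bs| with hB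
    set C : ℝ := Real.exp (2 * |lam.im| * B) with hC
    have hC1 : 1 ≤ C := by
      rw [hC, ← Real.exp_zero]
      apply Real.exp_le_exp.2
      have h0B : 0 ≤ B := le_trans (abs_nonneg as) (le_max_left _ _)
      positivity
    have him : ∀ w ∈ Ω, |w.im| ≤ B := by
      intro w hw
      obtain ⟨h1, h2⟩ := hsub hw
      rw [abs_le]
      constructor
      · calc -B ≤ -|as| := neg_le_neg (le_max_left _ _)
          _ ≤ as := neg_abs_le as
          _ ≤ w.im := h1.le
      · calc w.im ≤ bs := h2.le
          _ ≤ |bs| := le_abs_self bs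
          _ ≤ B := le_max_right _ _
    have hbound : ∀ w ∈ Ω, |2 * lam.im * w.im| ≤ 2 * |lam.im| * B := by
      intro w hw
      have h1 := him w hw
      have h2 : |2 * lam.im * w.im| = 2 * |lam.im| * |w.im| := by
        rw [abs_mul, abs_mul]
        norm_num
      rw [h2]
      have h0 : (0:ℝ) ≤ 2 * |lam.im| := by positivity
      exact mul_le_mul_of_nonneg_left h1 h0
    have hre : ∀ w : ℂ, 2 * (lam * w).re = 2 * a * w.re - 2 * lam.im * w.im := by
      intro w; rw [Complex.mul_re]; ring
    have hup : ∀ w ∈ Ω, Real.exp (2 * (lam * w).re) ≤ C * Real.exp (2 * a * w.re) := by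
      intro w hw
      rw [hre, hC, sub_eq_add_neg, Real.exp_add, mul_comm (Real.exp (2 * |lam.im| * B))]
      apply mul_le_mul_of_nonneg_left _ (Real.exp_nonneg _)
      apply Real.exp_le_exp.2
      have := hbound w hw
      have := neg_le_abs (2 * lam.im * w.im)
      linarith
    have hdown : ∀ w ∈ Ω, Real.exp (2 * a * w.re) ≤ C * Real.exp (2 * (lam * w).re) := by
      intro w hw
      have hb := hbound w hw
      have hle := le_abs_self (2 * lam.im * w.im)
      rw [hre, hC, sub_eq_add_neg, Real.exp_add]
      have key2 : 1 ≤ Real.exp (2 * |lam.im| * B) * Real.exp (-(2 * lam.im * w.im)) := by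
        rw [← Real.exp_add, ← Real.exp_zero]
        exact Real.exp_le_exp.2 (by linarith)
      have hfin : Real.exp (2 * a * w.re)
          ≤ (Real.exp (2 * |lam.im| * B) * Real.exp (-(2 * lam.im * w.im)))
            * Real.exp (2 * a * w.re) := by
        nth_rewrite 1 [(show Real.exp (2 * a * w.re) = 1 * Real.exp (2 * a * w.re) by ring)]
        exact mul_le_mul_of_nonneg_right key2 (Real.exp_nonneg _)
      calc Real.exp (2 * a * w.re)
          ≤ (Real.exp (2 * |lam.im| * B) * Real.exp (-(2 * lam.im * w.im)))
            * Real.exp (2 * a * w.re) := hfin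
        _ = Real.exp (2 * |lam.im| * B)
            * (Real.exp (2 * a * w.re) * Real.exp (-(2 * lam.im * w.im))) := by ring
    set J : ℝ≥0∞ := ∫⁻ w in Ω, ENNReal.ofReal (Real.exp (2 * a * w.re)) with hJ
    have hgm : Measurable fun w : ℂ => ENNReal.ofReal (Real.exp (2 * a * w.re)) :=
      hg.comp Complex.measurable_re
    have hKm : Measurable fun w : ℂ => ENNReal.ofReal (Real.exp (2 * (lam * w).re)) := by
      apply ENNReal.measurable_ofReal.comp
      apply (Real.continuous_exp.comp _).measurable
      exact (continuous_const.mul ((Complex.continuous_re.comp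
        (continuous_const.mul continuous_id))))
    have hKJ : K ≤ ENNReal.ofReal C * J := by
      rw [hJ, ← lintegral_const_mul' _ _ ENNReal.ofReal_ne_top]
      apply setLIntegral_mono (by exact (measurable_const.mul hgm)) 
      intro w hw
      rw [← ENNReal.ofReal_mul (by linarith : (0:ℝ) ≤ C)]
      exact ENNReal.ofReal_le_ofReal (hup w hw)
    have hJK : J ≤ ENNReal.ofReal C * K := by
      rw [hK, ← lintegral_const_mul' _ _ ENNReal.ofReal_ne_top]
      apply setLIntegral_mono (by exact (measurable_const.mul hKm))
      intro w hw
      rw [← ENNReal.ofReal_mul (by linarith : (0:ℝ) ≤ C)]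
      exact ENNReal.ofReal_le_ofReal (hdown w hw)
    have h2 : K < ⊤ ↔ J < ⊤ := by
      constructor
      · intro hKfin
        exact lt_of_le_of_lt hJK (ENNReal.mul_lt_top ENNReal.ofReal_lt_top hKfin)
      · intro hJfin
        exact lt_of_le_of_lt hKJ (ENNReal.mul_lt_top ENNReal.ofReal_lt_top hJfin)
    rw [h2, hJ, aux_lintegral_re_slice Ω hΩm _ hg]
  rw [key]
  have hℓm : Measurable (sliceLen Ω) := aux_sliceLen_meas Ω hΩm
  constructor
  · -- I < ⊤ → a < 0
    intro hIfin
    by_contra hcon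
    push_neg at hcon
    obtain ⟨w₀, hw₀⟩ := hconn.nonempty
    obtain ⟨r, hr0, hrball⟩ := Metric.isOpen_iff.1 hopen w₀ hw₀
    have hslice : ∀ x : ℝ, w₀.re ≤ x → ENNReal.ofReal r ≤ sliceLen Ω x := by
      intro x hx
      have hsubset : Ioo (w₀.im - r) (w₀.im + r) ⊆
          {y : ℝ | (x : ℂ) + (y : ℂ) * Complex.I ∈ Ω} := by
        intro y hy
        have h1 : (w₀.re : ℂ) + (y : ℂ) * Complex.I ∈ ball w₀ r := by
          rw [mem_ball, Complex.dist_eq]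
          have he : (w₀.re : ℂ) + (y : ℂ) * Complex.I - w₀ = ((y - w₀.im : ℝ) : ℂ) * Complex.I := by
            apply Complex.ext <;> simp
          rw [he]
          rw [norm_mul, Complex.norm_I, Complex.norm_real, Real.norm_eq_abs, mul_one]
          rw [abs_lt]
          constructor <;> [linarith [hy.1]; linarith [hy.2]]
        have h2 := hconv (x - w₀.re) (by linarith) _ (hrball h1)
        have he2 : (w₀.re : ℂ) + (y : ℂ) * Complex.I + ((x - w₀.re : ℝ) : ℂ)
            = (x : ℂ) + (y : ℂ) * Complex.I := by
          push_cast; ring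
        rw [he2] at h2
        exact h2
      calc ENNReal.ofReal r ≤ ENNReal.ofReal (2 * r) :=
            ENNReal.ofReal_le_ofReal (by linarith)
        _ = volume (Ioo (w₀.im - r) (w₀.im + r)) := by rw [Real.volume_Ioo]; congr 1; ring
        _ ≤ sliceLen Ω x := measure_mono hsubset
    set M0 : ℝ := max w₀.re 0 with hM0
    have htop : (⊤ : ℝ≥0∞) ≤ I := by
      calc (⊤ : ℝ≥0∞) = ENNReal.ofReal r * volume (Ici M0) := by
            rw [Real.volume_Ici, ENNReal.mul_top]
            exact (ENNReal.ofReal_pos.2 hr0).ne'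
        _ = ∫⁻ _ in Ici M0, ENNReal.ofReal r := by rw [setLIntegral_const]
        _ ≤ ∫⁻ x in Ici M0, ENNReal.ofReal (Real.exp (2 * a * x)) * sliceLen Ω x := by
            apply setLIntegral_mono (hg.mul hℓm)
            intro x hx
            have hx1 : w₀.re ≤ x := le_trans (le_max_left _ _) hx
            have hx2 : (0:ℝ) ≤ x := le_trans (le_max_right _ _) hx
            have hone : (1 : ℝ≥0∞) ≤ ENNReal.ofReal (Real.exp (2 * a * x)) := by
              rw [ENNReal.one_le_ofReal, ← Real.exp_zero]
              apply Real.exp_le_exp.2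
              positivity
            calc ENNReal.ofReal r = 1 * ENNReal.ofReal r := (one_mul _).symm
              _ ≤ ENNReal.ofReal (Real.exp (2 * a * x)) * sliceLen Ω x :=
                mul_le_mul' hone (hslice x hx1)
        _ ≤ I := setLIntegral_le_lintegral _ _
    rw [top_le_iff] at htop
    rw [htop] at hIfin
    exact absurd hIfin (lt_irrefl _)
  · -- a < 0 → I < ⊤
    intro haneg
    obtain ⟨xM, hxM, hl⟩ := hδ (1 - a) (by linarith)
    have hsplit1 : I = (∫⁻ x in Iio xM, ENNReal.ofReal (Real.exp (2 * a * x)) * sliceLen Ω x)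
        + ∫⁻ x in Ici xM, ENNReal.ofReal (Real.exp (2 * a * x)) * sliceLen Ω x := by
      rw [hI, ← lintegral_add_compl _ (measurableSet_Iio (a := xM)), compl_Iio]
    have hsplit2 : (∫⁻ x in Ici xM, ENNReal.ofReal (Real.exp (2 * a * x)) * sliceLen Ω x)
        = (∫⁻ x in Ico xM 0, ENNReal.ofReal (Real.exp (2 * a * x)) * sliceLen Ω x)
        + ∫⁻ x in Ici (0:ℝ), ENNReal.ofReal (Real.exp (2 * a * x)) * sliceLen Ω x := by
      rw [← lintegral_union measurableSet_Ici
        (Set.disjoint_left.mpr fun x hx h2 => absurd h2 (not_le.2 hx.2)),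
        Ico_union_Ici_eq_Ici hxM.le]
    -- piece 1
    have hp1 : (∫⁻ x in Iio xM, ENNReal.ofReal (Real.exp (2 * a * x)) * sliceLen Ω x) < ⊤ := by
      have hb : (∫⁻ x in Iio xM, ENNReal.ofReal (Real.exp (2 * a * x)) * sliceLen Ω x)
          ≤ ∫⁻ x in Iio xM, ENNReal.ofReal (Real.exp xM) * ENNReal.ofReal (Real.exp x) := by
        apply setLIntegral_mono
        · exact measurable_const.mul (ENNReal.measurable_ofReal.comp Real.measurable_exp)
        intro x hx
        have hxlt : x < xM := hx
        calc ENNReal.ofReal (Real.exp (2 * a * x)) * sliceLen Ω x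
            ≤ ENNReal.ofReal (Real.exp (2 * a * x))
              * ENNReal.ofReal (Real.exp (2 * (1 - a) * x)) :=
              mul_le_mul_right (hl x hxlt) _
          _ = ENNReal.ofReal (Real.exp (2 * x)) := by
              rw [← ENNReal.ofReal_mul (Real.exp_nonneg _), ← Real.exp_add]
              congr 2; ring
          _ ≤ ENNReal.ofReal (Real.exp xM * Real.exp x) := by
              rw [← Real.exp_add]
              exact ENNReal.ofReal_le_ofReal (Real.exp_le_exp.2 (by linarith))
          _ = ENNReal.ofReal (Real.exp xM) * ENNReal.ofReal (Real.exp x) :=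
              ENNReal.ofReal_mul (Real.exp_nonneg _)
      apply lt_of_le_of_lt hb
      rw [lintegral_const_mul' _ _ ENNReal.ofReal_ne_top]
      apply ENNReal.mul_lt_top ENNReal.ofReal_lt_top
      exact ((integrableOn_exp_Iic xM).mono_set Iio_subset_Iic_self).setLIntegral_lt_top
    -- piece 2
    have hp2 : (∫⁻ x in Ico xM 0, ENNReal.ofReal (Real.exp (2 * a * x)) * sliceLen Ω x) < ⊤ := by
      have hb : (∫⁻ x in Ico xM 0, ENNReal.ofReal (Real.exp (2 * a * x)) * sliceLen Ω x)
          ≤ ∫⁻ x in Ico xM 0, ENNReal.ofReal (Real.exp (2 * a * xM)) * sliceLen Ω x := by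
        apply setLIntegral_mono (measurable_const.mul hℓm)
        intro x hx
        apply mul_le_mul_left
        apply ENNReal.ofReal_le_ofReal
        apply Real.exp_le_exp.2
        nlinarith [hx.1]
      apply lt_of_le_of_lt hb
      rw [lintegral_const_mul' _ _ ENNReal.ofReal_ne_top]
      apply ENNReal.mul_lt_top ENNReal.ofReal_lt_top
      exact lt_of_le_of_lt (lintegral_mono_set fun x hx => hx.2) hW
    -- piece 3
    have hp3 : (∫⁻ x in Ici (0:ℝ), ENNReal.ofReal (Real.exp (2 * a * x)) * sliceLen Ω x) < ⊤ := by
      have hslice_le : ∀ x : ℝ, sliceLen Ω x ≤ ENNReal.ofReal (bs - as) := by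
        intro x
        have : {y : ℝ | (x : ℂ) + (y : ℂ) * Complex.I ∈ Ω} ⊆ Ioo as bs := by
          intro y hy
          have := hsub hy
          simpa using this
        calc sliceLen Ω x ≤ volume (Ioo as bs) := measure_mono this
          _ = ENNReal.ofReal (bs - as) := Real.volume_Ioo
      have hb : (∫⁻ x in Ici (0:ℝ), ENNReal.ofReal (Real.exp (2 * a * x)) * sliceLen Ω x)
          ≤ ∫⁻ x in Ici (0:ℝ), ENNReal.ofReal (bs - as)
            * ENNReal.ofReal (Real.exp (2 * a * x)) := by
        apply setLIntegral_mono (measurable_const.mul hg)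
        intro x _
        rw [mul_comm]
        exact mul_le_mul_left (hslice_le x) _
      apply lt_of_le_of_lt hb
      rw [lintegral_const_mul' _ _ ENNReal.ofReal_ne_top]
      apply ENNReal.mul_lt_top ENNReal.ofReal_lt_top
      have hint : IntegrableOn (fun x : ℝ => Real.exp (2 * a * x)) (Ici 0) := by
        rw [integrableOn_Ici_iff_integrableOn_Ioi]
        have := exp_neg_integrableOn_Ioi 0 (show (0:ℝ) < -(2 * a) by linarith)
        simpa [neg_neg] using this
      exact hint.setLIntegral_lt_top
    rw [hsplit1, hsplit2]
    exact ENNReal.add_lt_top.2 ⟨hp1, ENNReal.add_lt_top.2 ⟨hp2, hp3⟩⟩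
end
end

section
/- Let Ω be a simply connected domain contained in the upper half-plane {Im w > 0}, convex in the positive direction and not contained in any horizontal strip, and let h be a Koenigs map onto Ω. If Θ_Ω = 0 (and hence θ_Ω = 0), then for every λ ∈ ℂ with λ ≠ 0 one has D(e^{λh}) < ∞ if and only if Re λ < 0; that is, the point spectrum on the Dirichlet space equals the open left half-plane together with {0}. (Theorem 1.3(a).) -/
open MeasureTheory Set Complex Metric
open scoped ENNReal NNReal Real

noncomputable section

/-- The open angular sector `S(α,β) = {w ≠ 0 : α < arg w < β}` (principal argument). -/
def sector (a b : ℝ) : Set ℂ :=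
  {w : ℂ | w ≠ 0 ∧ a < Complex.arg w ∧ Complex.arg w < b}

/-- The inner argument `θ_Ω` of a domain contained in the upper half-plane. -/
def innerArg (Ω : Set ℂ) : ℝ :=
  sSup ({0} ∪ {θ : ℝ | θ ∈ Ioc 0 Real.pi ∧ ∃ q : ℂ, (fun w => q + w) '' sector 0 θ ⊆ Ω})

/-- The outer argument `Θ_Ω` of a domain contained in the upper half-plane. -/
def outerArg (Ω : Set ℂ) : ℝ :=
  sInf {θ : ℝ | θ ∈ Ioc 0 Real.pi ∧ ∃ q : ℂ, Ω ⊆ (fun w => q + w) '' sector 0 θ}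

/-! ### Auxiliary lemmas -/

lemma det_smulRight (d : ℂ) :
    (((ContinuousLinearMap.smulRight (1 : ℂ →L[ℂ] ℂ) d)).restrictScalars ℝ : ℂ →L[ℝ] ℂ).det
      = Complex.normSq d := by
  have h1 : ((((ContinuousLinearMap.smulRight (1 : ℂ →L[ℂ] ℂ) d)).restrictScalars ℝ : ℂ →L[ℝ] ℂ) :
      ℂ →ₗ[ℝ] ℂ) = Algebra.lmul ℝ ℂ d := by
    apply LinearMap.ext
    intro z
    simp [mul_comm]
  rw [ContinuousLinearMap.det, h1, ← Algebra.norm_apply, Algebra.norm_complex_apply]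

lemma cov_lemma {h : ℂ → ℂ} {Ω : Set ℂ}
    (hd : DifferentiableOn ℂ h (ball 0 1)) (hinj : InjOn h (ball 0 1))
    (him : h '' ball 0 1 = Ω) (g : ℂ → ℝ≥0∞) :
    ∫⁻ w in Ω, g w = ∫⁻ z in ball (0:ℂ) 1, (‖deriv h z‖₊ : ℝ≥0∞) ^ 2 * g (h z) := by
  have hf' : ∀ z ∈ ball (0:ℂ) 1, HasFDerivWithinAt h
      (((ContinuousLinearMap.smulRight (1 : ℂ →L[ℂ] ℂ) (deriv h z))).restrictScalars ℝ)
      (ball (0:ℂ) 1) z := by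
    intro z hz
    have hA : DifferentiableAt ℂ h z := hd.differentiableAt (isOpen_ball.mem_nhds hz)
    exact (hA.hasDerivAt.hasFDerivAt.restrictScalars ℝ).hasFDerivWithinAt
  rw [← him, lintegral_image_eq_lintegral_abs_det_fderiv_mul volume measurableSet_ball hf' hinj g]
  apply setLIntegral_congr_fun measurableSet_ball
  intro z _
  beta_reduce
  rw [det_smulRight]
  congr 1
  rw [_root_.abs_of_nonneg (Complex.normSq_nonneg _), ← Complex.sq_norm,
    ENNReal.ofReal_pow (norm_nonneg _), ofReal_norm, enorm_eq_nnnorm]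

lemma lintegral_complex_prod (F G : ℝ → ℝ≥0∞) (hF : Measurable F) (hG : Measurable G) :
    ∫⁻ w : ℂ, F w.re * G w.im = (∫⁻ x, F x) * ∫⁻ y, G y := by
  have hm : Measurable fun p : ℝ × ℝ => F p.1 * G p.2 :=
    (hF.comp measurable_fst).mul (hG.comp measurable_snd)
  have h1 := Complex.volume_preserving_equiv_real_prod.lintegral_comp
    (g := Complex.measurableEquivRealProd) (f := fun p : ℝ × ℝ => F p.1 * G p.2) hm
  have h2 : ∫⁻ p : ℝ × ℝ, F p.1 * G p.2 = (∫⁻ x, F x) * ∫⁻ y, G y := by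
    rw [Measure.volume_eq_prod, lintegral_prod_mul hF.aemeasurable hG.aemeasurable]
  rw [← h2, ← h1]
  rfl

lemma lintegral_exp_decay_ind (c r0 : ℝ) (hc : 0 < c) :
    ∫⁻ x : ℝ, (Ioi r0).indicator (fun x => ENNReal.ofReal (Real.exp (-(c * (x - r0))))) x < ⊤ := by
  rw [lintegral_indicator measurableSet_Ioi]
  have hint : IntegrableOn (fun x => Real.exp (-(c * (x - r0)))) (Ioi r0) := by
    have h0 : IntegrableOn (fun x => Real.exp (-c * x)) (Ioi r0) :=
      exp_neg_integrableOn_Ioi r0 hc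
    have h1 := h0.const_mul (Real.exp (c * r0))
    apply (integrableOn_congr_fun _ measurableSet_Ioi).mp h1
    intro x _
    simp only [← Real.exp_add]
    ring_nf
  exact hint.lintegral_lt_top

lemma volume_halfstrip (x0 y1 y2 : ℝ) (hy : y1 < y2) :
    volume {z : ℂ | x0 ≤ z.re ∧ z.im ∈ Ioo y1 y2} = ⊤ := by
  have hset : {z : ℂ | x0 ≤ z.re ∧ z.im ∈ Ioo y1 y2}
      = Complex.measurableEquivRealProd ⁻¹' (Ici x0 ×ˢ Ioo y1 y2) := by
    ext z
    simp [Complex.measurableEquivRealProd_apply, Set.mem_prod]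
  rw [hset, Complex.volume_preserving_equiv_real_prod.measure_preimage
    ((measurableSet_Ici.prod measurableSet_Ioo).nullMeasurableSet)]
  rw [Measure.volume_eq_prod, Measure.prod_prod, Real.volume_Ici, Real.volume_Ioo]
  rw [ENNReal.top_mul]
  simp [hy]

lemma sector_facts {θ : ℝ} (hθ2 : θ < π / 2) {v : ℂ} (hv : v ∈ sector 0 θ) :
    0 < v.re ∧ 0 < v.im ∧ v.im ≤ Real.tan θ * v.re := by
  obtain ⟨hv0, h1, h2⟩ := hv
  have habs : 0 < ‖v‖ := norm_pos_iff.mpr hv0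
  have hcos : 0 < Real.cos (Complex.arg v) :=
    Real.cos_pos_of_mem_Ioo ⟨by linarith [Real.pi_pos], by linarith⟩
  have hsin : 0 < Real.sin (Complex.arg v) :=
    Real.sin_pos_of_pos_of_lt_pi h1 (by linarith [Real.pi_pos])
  have hre : 0 < v.re := by
    rw [← Complex.norm_mul_cos_arg v]; positivity
  have him : 0 < v.im := by
    rw [← Complex.norm_mul_sin_arg v]; positivity
  refine ⟨hre, him, ?_⟩
  have htan : Real.tan (Complex.arg v) < Real.tan θ :=
    Real.tan_lt_tan_of_nonneg_of_lt_pi_div_two h1.le hθ2 h2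
  rw [Complex.tan_arg] at htan
  have := (div_lt_iff₀ hre).mp htan
  linarith

lemma upper_mem_sector_pi {w : ℂ} (hw : 0 < w.im) : w ∈ sector 0 π := by
  have hw0 : w ≠ 0 := by
    intro h; rw [h] at hw; simp at hw
  refine ⟨hw0, ?_, ?_⟩
  · by_contra hle
    push_neg at hle
    have h1 : Real.sin (Complex.arg w) ≤ 0 :=
      Real.sin_nonpos_of_nonpos_of_neg_pi_le hle (Complex.neg_pi_lt_arg w).le
    rw [Complex.sin_arg] at h1
    have := norm_pos_iff.mpr hw0
    have : w.im ≤ 0 := by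
      by_contra h2
      push_neg at h2
      have : 0 < w.im / ‖w‖ := div_pos h2 this
      linarith
    linarith
  · exact Complex.arg_lt_pi_iff.mpr (Or.inr hw.ne')

/-- **Theorem 1.3(a).** For a parabolic semigroup of positive hyperbolic step with Koenigs domain
`Ω` in the upper half-plane, if `Θ_Ω = 0` then the point spectrum on the Dirichlet space is the
open left half-plane together with `{0}`. -/
theorem dirichlet_spectrum_phs_outerArg_zero
    (Ω : Set ℂ) (hopen : IsOpen Ω) (hsc : SimplyConnectedSpace ↥Ω)
    (hupper : Ω ⊆ {w : ℂ | 0 < w.im})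
    (hconv : ConvexPosDir Ω)
    (hnostrip : ∀ a b : ℝ, ¬ Ω ⊆ {w : ℂ | a < w.im ∧ w.im < b})
    (h : ℂ → ℂ) (hKoenigs : IsKoenigsMap h Ω)
    (hΘ : outerArg Ω = 0)
    (lam : ℂ) (hlam : lam ≠ 0) :
    dirichletIntegral (fun z => Complex.exp (lam * h z)) < ⊤ ↔ lam.re < 0 := by
  obtain ⟨hdiff, hinj, him⟩ := hKoenigs
  set g : ℂ → ℝ≥0∞ := fun w => ENNReal.ofReal (Real.exp (2 * (lam * w).re)) with hg_def
  have hg_meas : Measurable g := by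
    apply Measurable.ennreal_ofReal
    fun_prop
  -- Step 1: D(e^{λh}) = ‖λ‖² ∫_Ω e^{2 Re(λw)} dA(w)
  have step1 : dirichletIntegral (fun z => Complex.exp (lam * h z))
      = (‖lam‖₊ : ℝ≥0∞) ^ 2 * ∫⁻ w in Ω, g w := by
    rw [cov_lemma hdiff hinj him g, dirichletIntegral]
    rw [← lintegral_const_mul' _ _ (ENNReal.pow_ne_top ENNReal.coe_ne_top :
      ((‖lam‖₊ : ℝ≥0∞) ^ 2) ≠ ⊤)]
    apply setLIntegral_congr_fun measurableSet_ball
    intro z hz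
    beta_reduce
    have hA : DifferentiableAt ℂ h z := hdiff.differentiableAt (isOpen_ball.mem_nhds hz)
    have hder : HasDerivAt (fun z => Complex.exp (lam * h z))
        (Complex.exp (lam * h z) * (lam * deriv h z)) z :=
      (hA.hasDerivAt.const_mul lam).cexp
    rw [hder.deriv]
    have hnn : (‖Complex.exp (lam * h z) * (lam * deriv h z)‖₊ : ℝ≥0∞)
        = ENNReal.ofReal (Real.exp ((lam * h z).re)) * ((‖lam‖₊ : ℝ≥0∞) * ‖deriv h z‖₊) := by
      rw [nnnorm_mul, nnnorm_mul, ENNReal.coe_mul, ENNReal.coe_mul,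
        ← enorm_eq_nnnorm (Complex.exp (lam * h z)), ← ofReal_norm (Complex.exp (lam * h z)),
        Complex.norm_exp]
    rw [hnn]
    have hexp2 : (ENNReal.ofReal (Real.exp ((lam * h z).re))) ^ 2
        = ENNReal.ofReal (Real.exp (2 * (lam * h z).re)) := by
      rw [← ENNReal.ofReal_pow (Real.exp_nonneg _), sq, ← Real.exp_add, two_mul]
    rw [mul_pow, mul_pow, hexp2]
    ring
  -- reduction : D < ⊤ ↔ ∫_Ω g < ⊤
  have hcoef0 : (‖lam‖₊ : ℝ≥0∞) ^ 2 ≠ 0 := by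
    simp [pow_eq_zero_iff, nnnorm_eq_zero, hlam]
  have hcoefT : (‖lam‖₊ : ℝ≥0∞) ^ 2 ≠ ⊤ := ENNReal.pow_ne_top ENNReal.coe_ne_top
  have reduction : dirichletIntegral (fun z => Complex.exp (lam * h z)) < ⊤
      ↔ (∫⁻ w in Ω, g w) < ⊤ := by
    rw [step1]
    constructor
    · intro hfin
      by_contra htop
      rw [not_lt, top_le_iff] at htop
      rw [htop, ENNReal.mul_top hcoef0] at hfin
      exact lt_irrefl _ hfin
    · intro hfin
      exact ENNReal.mul_lt_top hcoefT.lt_top hfin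
  rw [reduction]
  constructor
  · -- If the integral is finite then Re λ < 0
    intro hfin
    by_contra hre
    push_neg at hre
    -- take a half-strip inside Ω
    have h0mem : (0 : ℂ) ∈ ball (0 : ℂ) 1 := mem_ball_self one_pos
    have hw0 : h 0 ∈ Ω := him ▸ mem_image_of_mem h h0mem
    obtain ⟨δ, hδ, hball⟩ := Metric.isOpen_iff.mp hopen (h 0) hw0
    set w0 := h 0
    set δ' := δ / 2 with hδ'_def
    have hδ' : 0 < δ' := by positivity
    set R : Set ℂ := {z : ℂ | w0.re ≤ z.re ∧ z.im ∈ Ioo (w0.im - δ') (w0.im + δ')} with hR_def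
    have hRΩ : R ⊆ Ω := by
      rintro z ⟨hz1, hz2, hz3⟩
      have hp : (⟨w0.re, z.im⟩ : ℂ) ∈ ball w0 δ := by
        rw [mem_ball, Complex.dist_eq]
        calc ‖(⟨w0.re, z.im⟩ : ℂ) - w0‖
            ≤ |((⟨w0.re, z.im⟩ : ℂ) - w0).re| + |((⟨w0.re, z.im⟩ : ℂ) - w0).im| :=
              Complex.norm_le_abs_re_add_abs_im _
          _ < δ := by
              have h2 : |z.im - w0.im| < δ' := abs_lt.mpr ⟨by linarith, by linarith⟩
              simp only [Complex.sub_re, Complex.sub_im,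
                show (⟨w0.re, z.im⟩ : ℂ).re = w0.re from rfl,
                show (⟨w0.re, z.im⟩ : ℂ).im = z.im from rfl, sub_self, abs_zero, zero_add]
              have : δ' < δ := by rw [hδ'_def]; linarith
              linarith
      have := hconv (z.re - w0.re) (by linarith) _ (hball hp)
      have heq : (⟨w0.re, z.im⟩ : ℂ) + ((z.re - w0.re : ℝ) : ℂ) = z := by
        apply Complex.ext <;> simp [show (⟨w0.re, z.im⟩ : ℂ).re = w0.re from rfl,
          show (⟨w0.re, z.im⟩ : ℂ).im = z.im from rfl]
      rwa [heq] at this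
    -- lower bound for g on R
    set r0 : ℝ := lam.re * w0.re - |lam.im| * (|w0.im| + δ') with hr0_def
    have hlow : ∀ z ∈ R, ENNReal.ofReal (Real.exp (2 * r0)) ≤ g z := by
      rintro z ⟨hz1, hz2, hz3⟩
      apply ENNReal.ofReal_le_ofReal
      apply Real.exp_le_exp.mpr
      have him_bound : |z.im| ≤ |w0.im| + δ' := by
        rw [abs_le]
        constructor
        · have := neg_abs_le w0.im; linarith
        · have := le_abs_self w0.im; linarith
      have h1 : lam.re * w0.re ≤ lam.re * z.re := by
        apply mul_le_mul_of_nonneg_left hz1 hre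
      have h2 : -(lam.im * z.im) ≥ -(|lam.im| * (|w0.im| + δ')) := by
        have : lam.im * z.im ≤ |lam.im| * |z.im| := by
          calc lam.im * z.im ≤ |lam.im * z.im| := le_abs_self _
            _ = |lam.im| * |z.im| := abs_mul _ _
        have : lam.im * z.im ≤ |lam.im| * (|w0.im| + δ') := by
          apply this.trans
          apply mul_le_mul_of_nonneg_left him_bound (abs_nonneg _)
        linarith
      rw [Complex.mul_re]
      nlinarith
    -- hence the integral is infinite
    have hRmeas : volume R = ⊤ := by
      rw [hR_def]
      exact volume_halfstrip w0.re (w0.im - δ') (w0.im + δ') (by linarith)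
    have : (⊤ : ℝ≥0∞) ≤ ∫⁻ w in Ω, g w := by
      calc (⊤ : ℝ≥0∞) = ENNReal.ofReal (Real.exp (2 * r0)) * volume R := by
            rw [hRmeas, ENNReal.mul_top (by positivity)]
        _ = ∫⁻ _ in R, ENNReal.ofReal (Real.exp (2 * r0)) := (setLIntegral_const _ _).symm
        _ ≤ ∫⁻ w in R, g w := setLIntegral_mono hg_meas hlow
        _ ≤ ∫⁻ w in Ω, g w := lintegral_mono_set hRΩ
    rw [top_le_iff] at this
    rw [this] at hfin
    exact lt_irrefl _ hfin
  · -- If Re λ < 0 then the integral is finite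
    intro hre
    set a := lam.re
    set b := lam.im
    set t : ℝ := (-a) / (2 * (|b| + 1)) with ht_def
    have ht : 0 < t := by
      apply div_pos (by linarith)
      positivity
    -- find a thin sector containing Ω
    set S := {θ : ℝ | θ ∈ Ioc 0 Real.pi ∧ ∃ q : ℂ, Ω ⊆ (fun w => q + w) '' sector 0 θ} with hS_def
    have hπS : π ∈ S := by
      refine ⟨⟨Real.pi_pos, le_refl _⟩, 0, ?_⟩
      intro w hw
      exact ⟨w, upper_mem_sector_pi (hupper hw), by simp⟩
    have hSbdd : BddBelow S := ⟨0, fun θ hθ => hθ.1.1.le⟩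
    set ε : ℝ := min (π / 4) (Real.arctan t) with hε_def
    have hε : 0 < ε := by
      apply lt_min
      · linarith [Real.pi_pos]
      · rw [← Real.arctan_zero]
        exact Real.arctan_strictMono ht
    have hinf : sInf S = 0 := by rw [hS_def]; exact hΘ
    have hlt : sInf S < ε := by rw [hinf]; exact hε
    obtain ⟨θ, hθS, hθε⟩ := (csInf_lt_iff hSbdd ⟨π, hπS⟩).mp hlt
    obtain ⟨⟨hθ0, hθπ⟩, q, hq⟩ := hθS
    have hθhalf : θ < π / 2 := by
      have : ε ≤ π / 4 := min_le_left _ _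
      linarith [Real.pi_pos]
    have htanpos : 0 < Real.tan θ := by
      have := Real.tan_lt_tan_of_nonneg_of_lt_pi_div_two (le_refl 0) hθhalf hθ0
      rwa [Real.tan_zero] at this
    have htant : Real.tan θ < t := by
      have h1 : θ < Real.arctan t := lt_of_lt_of_le hθε (min_le_right _ _)
      have := Real.tan_lt_tan_of_nonneg_of_lt_pi_div_two hθ0.le
        (Real.arctan_lt_pi_div_two t) h1
      rwa [Real.tan_arctan] at this
    have hbt : |b| * Real.tan θ ≤ (-a) / 2 := by
      have h1 : |b| * Real.tan θ ≤ (|b| + 1) * Real.tan θ := by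
        apply mul_le_mul_of_nonneg_right (by linarith) htanpos.le
      have h2 : (|b| + 1) * Real.tan θ < (|b| + 1) * t := by
        apply mul_lt_mul_of_pos_left htant (by positivity)
      have h3 : (|b| + 1) * t = (-a) / 2 := by
        rw [ht_def]; field_simp
      linarith
    -- constants
    set c1 : ℝ := (-a) / 4 with hc1_def
    have hc1 : 0 < c1 := by rw [hc1_def]; linarith
    set c2 : ℝ := c1 / Real.tan θ with hc2_def
    have hc2 : 0 < c2 := div_pos hc1 htanpos
    -- the dominating function
    set C : ℝ≥0∞ := ENNReal.ofReal (Real.exp (2 * (lam * q).re)) with hC_def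
    set F : ℝ → ℝ≥0∞ :=
      (Ioi q.re).indicator (fun x => ENNReal.ofReal (Real.exp (-(2 * c1 * (x - q.re))))) with hF_def
    set G : ℝ → ℝ≥0∞ :=
      (Ioi q.im).indicator (fun y => ENNReal.ofReal (Real.exp (-(2 * c2 * (y - q.im))))) with hG_def
    have hF_meas : Measurable F := by
      apply Measurable.indicator _ measurableSet_Ioi
      apply Measurable.ennreal_ofReal; fun_prop
    have hG_meas : Measurable G := by
      apply Measurable.indicator _ measurableSet_Ioi
      apply Measurable.ennreal_ofReal; fun_prop
    have hbound : ∀ w ∈ Ω, g w ≤ C * (F w.re * G w.im) := by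
      intro w hw
      obtain ⟨v, hv, hqv0⟩ := hq hw
      obtain ⟨hvre, hvim, hvtan⟩ := sector_facts hθhalf hv
      have hqv : q + v = w := hqv0
      have hwre : w.re = q.re + v.re := by rw [← hqv]; simp
      have hwim : w.im = q.im + v.im := by rw [← hqv]; simp
      have hFw : F w.re = ENNReal.ofReal (Real.exp (-(2 * c1 * v.re))) := by
        rw [hF_def, indicator_of_mem (by rw [hwre]; exact lt_add_of_pos_right _ hvre : w.re ∈ Ioi q.re)]
        rw [hwre]; ring_nf
      have hGw : G w.im = ENNReal.ofReal (Real.exp (-(2 * c2 * v.im))) := by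
        rw [hG_def, indicator_of_mem (by rw [hwim]; exact lt_add_of_pos_right _ hvim : w.im ∈ Ioi q.im)]
        rw [hwim]; ring_nf
      rw [hFw, hGw, hC_def, ← ENNReal.ofReal_mul (Real.exp_nonneg _),
        ← ENNReal.ofReal_mul (Real.exp_nonneg _), ← Real.exp_add, ← Real.exp_add]
      apply ENNReal.ofReal_le_ofReal
      apply Real.exp_le_exp.mpr
      -- key inequality
      have hkey : (lam * v).re ≤ -(c1 * v.re) - c2 * v.im := by
        have h1 : (lam * v).re = a * v.re - b * v.im := Complex.mul_re lam v
        have h2 : -(b * v.im) ≤ |b| * v.im := by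
          have : -b ≤ |b| := neg_le_abs b
          nlinarith
        have h3 : |b| * v.im ≤ |b| * (Real.tan θ * v.re) :=
          mul_le_mul_of_nonneg_left hvtan (abs_nonneg _)
        have h4 : |b| * (Real.tan θ * v.re) ≤ ((-a) / 2) * v.re := by
          rw [← mul_assoc]
          exact mul_le_mul_of_nonneg_right hbt hvre.le
        have h5 : c2 * v.im ≤ c1 * v.re := by
          have hdiv : v.im / Real.tan θ ≤ v.re := by
            rw [div_le_iff₀ htanpos]
            nlinarith
          have he : c2 * v.im = c1 * (v.im / Real.tan θ) := by
            rw [hc2_def, div_mul_eq_mul_div, mul_div_assoc]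
          rw [he]
          exact mul_le_mul_of_nonneg_left hdiv hc1.le
        have h6 : c1 * v.re = (-a / 4) * v.re := by rw [hc1_def]
        have h7 : (-a / 2) * v.re = 2 * ((-a / 4) * v.re) := by ring
        rw [h1]
        linarith
      have hwq : (lam * w).re = (lam * q).re + (lam * v).re := by
        rw [← hqv, mul_add, Complex.add_re]
      rw [hwq]
      linarith [hkey]
    -- conclude finiteness
    have hfin : (∫⁻ w in Ω, g w) ≤ C * ((∫⁻ x, F x) * ∫⁻ y, G y) := by
      calc ∫⁻ w in Ω, g w ≤ ∫⁻ w in Ω, C * (F w.re * G w.im) := by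
            apply setLIntegral_mono
            · exact (hF_meas.comp Complex.measurable_re).mul
                (hG_meas.comp Complex.measurable_im) |>.const_mul C
            · exact hbound
        _ ≤ ∫⁻ w : ℂ, C * (F w.re * G w.im) := setLIntegral_le_lintegral _ _
        _ = C * ∫⁻ w : ℂ, F w.re * G w.im := by
            rw [lintegral_const_mul' _ _ (by rw [hC_def]; exact ENNReal.ofReal_ne_top)]
        _ = C * ((∫⁻ x, F x) * ∫⁻ y, G y) := by
            rw [lintegral_complex_prod F G hF_meas hG_meas]
    apply lt_of_le_of_lt hfin
    apply ENNReal.mul_lt_top (by rw [hC_def]; exact ENNReal.ofReal_lt_top)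
    apply ENNReal.mul_lt_top
    · exact lintegral_exp_decay_ind (2 * c1) q.re (by linarith)
    · exact lintegral_exp_decay_ind (2 * c2) q.im (by linarith)
end
end
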